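/- arXiv:2602.08317 — 2 statements merged into one kernel-verified Lean document; each statement's English description precedes it below -/
import Mathlib

section
/- Let i: A → B and p: X → Y be G-maps, and let f: A → X and g: B → Y be G-maps with p ∘ f = g ∘ i. Suppose there exists a G-numerable open cover {U_α}_{α ∈ I} of B such that for every α ∈ I and every subset J ⊆ I, writing W = U_α ∩ (⋃_{β ∈ J} U_β): (existence) there exists a G-map ψ: W → X with p(ψ(w)) = g(w) for all w ∈ W and ψ(i(a)) = f(a) for all a ∈ i⁻¹(W); and (uniqueness up to relative homotopy) for any two such G-maps ψ₁, ψ₂: W → X there is a G-homotopy K: W × I → X from ψ₁ to ψ₂ with p(K(w,t)) = g(w) for all w, t and K(i(a),t) = f(a) for all a ∈ i⁻¹(W) and all t. Then there exists a G-map ψ: B → X with p ∘ ψ = g and ψ ∘ i = f. -/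
open unitInterval Pointwise

noncomputable section

universe u v w x

/-- The trivial action of any group on `Empty`. -/
instance emptySMul (G : Type u) : SMul G Empty := ⟨fun _ e => e⟩

instance emptyMulAction (G : Type u) [Monoid G] : MulAction G Empty where
  one_smul _ := rfl
  mul_smul _ _ _ := rfl

instance emptyContinuousSMul (G : Type u) [Monoid G] [TopologicalSpace G] :
    ContinuousSMul G Empty := ⟨continuous_of_discreteTopology⟩

variable (G : Type u) [Group G]

/-- A continuous `G`-equivariant map of `G`-spaces. -/
def IsGMap {X Y : Type*} [TopologicalSpace X] [TopologicalSpace Y]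
    [MulAction G X] [MulAction G Y] (f : X → Y) : Prop :=
  Continuous f ∧ ∀ (g : G) (x : X), f (g • x) = g • f x

/-- A `G`-homotopy, i.e. a continuous map `X × I → Y` which is equivariant,
where `G` acts trivially on the interval `I`. -/
def IsGHomotopy {X Y : Type*} [TopologicalSpace X] [TopologicalSpace Y]
    [MulAction G X] [MulAction G Y] (K : X × I → Y) : Prop :=
  Continuous K ∧ ∀ (g : G) (x : X) (t : I), K (g • x, t) = g • K (x, t)

/-- Two maps are `G`-homotopic if there is a `G`-homotopy from the first to the second. -/
def GHomotopic {X Y : Type*} [TopologicalSpace X] [TopologicalSpace Y]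
    [MulAction G X] [MulAction G Y] (f₀ f₁ : X → Y) : Prop :=
  ∃ K : X × I → Y, IsGHomotopy G K ∧ (∀ x, K (x, 0) = f₀ x) ∧ ∀ x, K (x, 1) = f₁ x

/-- `G`-homotopy equivalence of `G`-spaces. -/
def GHomotopyEquiv (X : Type v) (Y : Type w) [TopologicalSpace X] [TopologicalSpace Y]
    [MulAction G X] [MulAction G Y] : Prop :=
  ∃ (f : X → Y) (g : Y → X), IsGMap G f ∧ IsGMap G g ∧
    GHomotopic G (fun x => g (f x)) id ∧ GHomotopic G (fun y => f (g y)) id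

variable [TopologicalSpace G]

/-- `i : A → B` is an `hG`-cofibration if it is a `G`-map satisfying the `G`-equivariant
homotopy extension property. -/
def IsHCofibration {A : Type v} {B : Type w} [TopologicalSpace A] [TopologicalSpace B]
    [MulAction G A] [MulAction G B] (i : A → B) : Prop :=
  IsGMap G i ∧
    ∀ (Y : Type x) [TopologicalSpace Y] [MulAction G Y] [ContinuousSMul G Y],
      ∀ f : B → Y, IsGMap G f →
        ∀ K : A × I → Y, IsGHomotopy G K → (∀ a, K (a, 0) = f (i a)) →
          ∃ L : B × I → Y, IsGHomotopy G L ∧ (∀ b, L (b, 0) = f b) ∧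
            ∀ a t, L (i a, t) = K (a, t)

/-- `p : E → B` is an `hG`-fibration if it is a `G`-map satisfying the `G`-equivariant
homotopy lifting property. -/
def IsHFibration {E : Type v} {B : Type w} [TopologicalSpace E] [TopologicalSpace B]
    [MulAction G E] [MulAction G B] (p : E → B) : Prop :=
  IsGMap G p ∧
    ∀ (X : Type x) [TopologicalSpace X] [MulAction G X] [ContinuousSMul G X],
      ∀ f : X → E, IsGMap G f →
        ∀ K : X × I → B, IsGHomotopy G K → (∀ x, K (x, 0) = p (f x)) →
          ∃ L : X × I → E, IsGHomotopy G L ∧ (∀ x, L (x, 0) = f x) ∧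
            ∀ x t, p (L (x, t)) = K (x, t)

/-- A (non-equivariant) Serre fibration: a map with the homotopy lifting property
with respect to all disks (equivalently, cubes). -/
def IsSerreFibration {X Y : Type*} [TopologicalSpace X] [TopologicalSpace Y]
    (p : X → Y) : Prop :=
  ∀ (n : ℕ) (f : (Fin n → I) → X) (K : ((Fin n → I) × I) → Y),
    Continuous f → Continuous K → (∀ c, K (c, 0) = p (f c)) →
      ∃ L : ((Fin n → I) × I) → X, Continuous L ∧ (∀ c, L (c, 0) = f c) ∧
        ∀ q, p (L q) = K q

/-- The map induced on path components by a continuous map. -/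
def pi0Map {X : Type v} {Y : Type w} [TopologicalSpace X] [TopologicalSpace Y]
    {f : X → Y} (hf : Continuous f) : ZerothHomotopy X → ZerothHomotopy Y :=
  Quotient.map (sa := pathSetoid X) (sb := pathSetoid Y) f
    (fun _ _ h => Nonempty.map (fun p => p.map hf) h)

/-- Composition of a generalized loop with a continuous map. -/
def genLoopComp {X : Type v} {Y : Type w} [TopologicalSpace X] [TopologicalSpace Y]
    {N : Type*} (f : C(X, Y)) {x : X} (p : GenLoop N X x) : GenLoop N Y (f x) :=
  ⟨f.comp p.1, fun yy hyy => by
    simp only [ContinuousMap.comp_apply]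
    exact congrArg f (p.2 yy hyy)⟩

/-- The map induced on homotopy groups by a continuous map. -/
def piMap {X : Type v} {Y : Type w} [TopologicalSpace X] [TopologicalSpace Y]
    (N : Type*) (f : C(X, Y)) (x : X) :
    HomotopyGroup N X x → HomotopyGroup N Y (f x) :=
  Quotient.map (genLoopComp f) (fun _ _ h => Nonempty.map (fun F => F.compContinuousMap f) h)

/-- A weak homotopy equivalence: a continuous map inducing a bijection on path components
and isomorphisms on all homotopy groups at all basepoints. -/
def IsWeakEquiv {X : Type v} {Y : Type w} [TopologicalSpace X] [TopologicalSpace Y]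
    (f : X → Y) : Prop :=
  ∃ hf : Continuous f,
    Function.Bijective (pi0Map hf) ∧
      ∀ (n : ℕ) (x : X), Function.Bijective (piMap (Fin (n + 1)) ⟨f, hf⟩ x)

/-- The `H`-fixed points of a `G`-space, for `H` a subgroup of `G`. -/
def fixedSet (H : Subgroup G) (X : Type v) [MulAction G X] : Set X :=
  {x | ∀ h ∈ H, h • x = x}

/-- The restriction of an equivariant map to `H`-fixed points. -/
def fixedRes (H : Subgroup G) {X Y : Type*} [MulAction G X] [MulAction G Y]
    (p : X → Y) (hp : ∀ (g : G) (x : X), p (g • x) = g • p x) :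
    fixedSet G H X → fixedSet G H Y :=
  fun x => ⟨p x.1, fun h hh => by rw [← hp h x.1, x.2 h hh]⟩

/-- A `C`-fibration: a `G`-map all of whose `H`-fixed point maps, `H ∈ C`,
are Serre fibrations. -/
def IsCFibration (C : Set (Subgroup G)) {X Y : Type*} [TopologicalSpace X] [TopologicalSpace Y]
    [MulAction G X] [MulAction G Y] (p : X → Y) : Prop :=
  ∃ hp : IsGMap G p, ∀ H ∈ C, IsSerreFibration (fixedRes G H p hp.2)

/-- A `C`-equivalence: a `G`-map all of whose `H`-fixed point maps, `H ∈ C`,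
are weak homotopy equivalences. -/
def IsCEquiv (C : Set (Subgroup G)) {X Y : Type*} [TopologicalSpace X] [TopologicalSpace Y]
    [MulAction G X] [MulAction G Y] (p : X → Y) : Prop :=
  ∃ hp : IsGMap G p, ∀ H ∈ C, IsWeakEquiv (fixedRes G H p hp.2)

/-- A `C`-cofibration: a `G`-map with the left lifting property against all `G`-maps
that are both `C`-fibrations and `C`-equivalences. -/
def IsCCofibration (C : Set (Subgroup G)) {A : Type v} {B : Type w} [TopologicalSpace A]
    [TopologicalSpace B] [MulAction G A] [MulAction G B] (i : A → B) : Prop :=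
  IsGMap G i ∧
    ∀ (X Y : Type x) [TopologicalSpace X] [TopologicalSpace Y] [MulAction G X] [MulAction G Y]
      [ContinuousSMul G X] [ContinuousSMul G Y] (p : X → Y),
        IsCFibration G C p → IsCEquiv G C p →
          ∀ (f : A → X) (g : B → Y), IsGMap G f → IsGMap G g → (∀ a, p (f a) = g (i a)) →
            ∃ l : B → X, IsGMap G l ∧ (∀ a, l (i a) = f a) ∧ ∀ b, p (l b) = g b

/-- A `G`-space is `C`-cofibrant if the map from the empty `G`-space is a `C`-cofibration. -/
def IsCCofibrant (C : Set (Subgroup G)) (X : Type v) [TopologicalSpace X] [MulAction G X] :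
    Prop :=
  IsCCofibration.{u, 0, v, x} G C (fun e : Empty => e.elim : Empty → X)

/-- A `G`-space is `mC`-cofibrant if it is `G`-homotopy equivalent to a `C`-cofibrant
`G`-space. -/
def IsMCofibrant (C : Set (Subgroup G)) (X : Type v) [TopologicalSpace X] [MulAction G X] :
    Prop :=
  ∃ (Z : Type w) (_ : TopologicalSpace Z) (_ : MulAction G Z) (_ : ContinuousSMul G Z),
    IsCCofibrant.{u, w, x} G C Z ∧ GHomotopyEquiv G X Z

/-- A `G`-numerable open cover: a locally finite open cover admitting subordinate
equivariant functions to `[0,1]` cutting out the cover. -/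
def IsGNumerableCover {B : Type v} [TopologicalSpace B] [MulAction G B]
    {ι : Type w} (U : ι → Set B) : Prop :=
  (∀ j, IsOpen (U j)) ∧ (∀ b, ∃ j, b ∈ U j) ∧ LocallyFinite U ∧
    ∀ j, ∃ lam : B → I, Continuous lam ∧ (∀ (g : G) (b : B), lam (g • b) = lam b) ∧
      U j = {b | 0 < lam b}

/-- A set closed under the action of `G`. -/
class GInvariantSet (G : Type u) {X : Type v} [SMul G X] (s : Set X) : Prop where
  smul_mem' : ∀ (g : G) {x : X}, x ∈ s → g • x ∈ s

instance GInvariantSet.instSMul {G : Type u} {X : Type v} [SMul G X] (s : Set X)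
    [GInvariantSet G s] : SMul G s :=
  ⟨fun g x => ⟨g • x.1, GInvariantSet.smul_mem' g x.2⟩⟩

instance GInvariantSet.instMulAction {G : Type u} {X : Type v} [Monoid G] [MulAction G X]
    (s : Set X) [GInvariantSet G s] : MulAction G s where
  one_smul x := Subtype.ext (one_smul G x.1)
  mul_smul a b x := Subtype.ext (mul_smul a b x.1)

instance GInvariantSet.instContinuousSMul {G : Type u} {X : Type v} [TopologicalSpace G]
    [TopologicalSpace X] [Monoid G] [MulAction G X] [ContinuousSMul G X] (s : Set X)
    [GInvariantSet G s] : ContinuousSMul G s :=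
  ⟨by
    apply Continuous.subtype_mk
    exact continuous_smul.comp (continuous_fst.prodMk (continuous_subtype_val.comp
      continuous_snd))⟩
variable [IsTopologicalGroup G] [CompactSpace G]

section
variable {B X Y : Type v} [TopologicalSpace B] [MulAction G B]
  [TopologicalSpace X] [MulAction G X] [TopologicalSpace Y] [MulAction G Y]

/-- A partial solution of the lifting problem `(f, g)` for `i` against `p`, defined on
the subspace `W ⊆ B`: a continuous equivariant map `ψ : W → X` with `p ∘ ψ = g` on `W`
and `ψ ∘ i = f` on `i⁻¹(W)`. -/
def IsPartialSolution {A : Type v} [TopologicalSpace A] [MulAction G A]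
    (i : A → B) (p : X → Y) (f : A → X) (g : B → Y) (W : Set B) (ψ : W → X) : Prop :=
  Continuous ψ ∧
    (∀ (g₀ : G) (w w' : W), (w' : B) = g₀ • (w : B) → ψ w' = g₀ • ψ w) ∧
    (∀ w : W, p (ψ w) = g (w : B)) ∧
    ∀ (a : A) (ha : i a ∈ W), ψ ⟨i a, ha⟩ = f a

end

section Statement6Aux

set_option linter.unusedSectionVars false

variable {A B X Y : Type v}
    [TopologicalSpace A] [MulAction G A]
    [TopologicalSpace B] [MulAction G B]
    [TopologicalSpace X] [MulAction G X]
    [TopologicalSpace Y] [MulAction G Y]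
    {ι : Type v}

/-- Sum of the numeration functions of a subfamily of the cover. -/
noncomputable def s6vsum (lam : ι → B → I) (J : Set ι) (b : B) : ℝ :=
  ∑' (β : J), ((lam β b : ℝ))

theorem s6vsum_summable {U : ι → Set B} {lam : ι → B → I}
    (hLF : LocallyFinite U) (hlamU : ∀ j, U j = {b | 0 < lam j b})
    (J : Set ι) (b : B) : Summable (fun β : J => ((lam β b : ℝ))) := by
  have hfin : {j | b ∈ U j}.Finite := hLF.point_finite b
  have hfin2 : {β : J | (β : ι) ∈ {j | b ∈ U j}}.Finite :=
    Set.Finite.preimage (Subtype.val_injective.injOn) hfin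
  apply summable_of_ne_finset_zero (s := hfin2.toFinset)
  intro β hβ
  simp only [Set.Finite.mem_toFinset, Set.mem_setOf_eq] at hβ
  have h1 : ¬ 0 < lam β b := by
    intro h; exact hβ (by rw [hlamU]; exact h)
  have h2 : lam (β : ι) b = 0 := le_antisymm (not_lt.1 h1) (lam β b).2.1
  rw [h2]; rfl

theorem s6vsum_nonneg (lam : ι → B → I) (J : Set ι) (b : B) : 0 ≤ s6vsum lam J b :=
  tsum_nonneg (fun β => (lam β b).2.1)

theorem s6vsum_pos_iff {U : ι → Set B} {lam : ι → B → I}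
    (hLF : LocallyFinite U) (hlamU : ∀ j, U j = {b | 0 < lam j b})
    (J : Set ι) (b : B) : 0 < s6vsum lam J b ↔ b ∈ ⋃ β ∈ J, U β := by
  constructor
  · intro h
    by_contra hb
    have hz : ∀ β : J, ((lam β b : ℝ)) = 0 := by
      intro β
      have h1 : b ∉ U β := fun hmem => hb (Set.mem_biUnion β.2 hmem)
      rw [hlamU] at h1
      have h2 : lam (β:ι) b = 0 := le_antisymm (not_lt.1 h1) (lam β b).2.1
      rw [h2]; rfl
    rw [s6vsum, tsum_congr hz, tsum_zero] at h
    exact lt_irrefl 0 h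
  · intro hb
    rw [Set.mem_iUnion₂] at hb
    obtain ⟨β, hβJ, hβ⟩ := hb
    rw [hlamU] at hβ
    have hle : ((lam β b : ℝ)) ≤ s6vsum lam J b :=
      Summable.le_tsum (s6vsum_summable hLF hlamU J b) ⟨β, hβJ⟩ (fun _ _ => (lam _ b).2.1)
    have hpos : (0:ℝ) < (lam β b : ℝ) := hβ
    linarith

theorem s6vsum_continuous {U : ι → Set B} {lam : ι → B → I}
    (hLF : LocallyFinite U) (hlamU : ∀ j, U j = {b | 0 < lam j b})
    (hlamc : ∀ j, Continuous (lam j)) (J : Set ι) : Continuous (s6vsum lam J) := by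
  rw [continuous_iff_continuousAt]
  intro b
  obtain ⟨N, hN, hNfin⟩ := hLF b
  have hfin2 : {β : J | (β : ι) ∈ {j | (U j ∩ N).Nonempty}}.Finite :=
    Set.Finite.preimage (Subtype.val_injective.injOn) hNfin
  have heq : ∀ b' ∈ N, s6vsum lam J b' = ∑ β ∈ hfin2.toFinset, ((lam β b' : ℝ)) := by
    intro b' hb'
    apply tsum_eq_sum
    intro β hβ
    simp only [Set.Finite.mem_toFinset, Set.mem_setOf_eq] at hβ
    have h1 : b' ∉ U β := fun hmem => hβ ⟨b', hmem, hb'⟩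
    rw [hlamU] at h1
    have h2 : lam (β:ι) b' = 0 := le_antisymm (not_lt.1 h1) (lam β b').2.1
    rw [h2]; rfl
  have hc : ContinuousAt (fun b' => ∑ β ∈ hfin2.toFinset, ((lam β b' : ℝ))) b := by
    apply Continuous.continuousAt
    exact continuous_finset_sum _ (fun β _ => continuous_induced_dom.comp (hlamc β))
  apply hc.congr
  filter_upwards [hN] with b' hb' using (heq b' hb').symm

theorem s6vsum_inv {lam : ι → B → I}
    (hlaminv : ∀ j (g₀ : G) (b : B), lam j (g₀ • b) = lam j b)
    (J : Set ι) (g₀ : G) (b : B) : s6vsum lam J (g₀ • b) = s6vsum lam J b :=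
  tsum_congr fun β => by rw [hlaminv]

/-- The interpolation weight used to combine two partial solutions. -/
noncomputable def s6w (lam : ι → B → I) (α : ι) (J : Set ι) (b : B) : ℝ :=
  (lam α b : ℝ) / ((lam α b : ℝ) + s6vsum lam J b)

theorem s6w_inv {lam : ι → B → I}
    (hlaminv : ∀ j (g₀ : G) (b : B), lam j (g₀ • b) = lam j b)
    (α : ι) (J : Set ι) (g₀ : G) (b : B) : s6w lam α J (g₀ • b) = s6w lam α J b := by
  unfold s6w
  rw [hlaminv, s6vsum_inv G hlaminv]

theorem s6w_nonneg (lam : ι → B → I) (α : ι) (J : Set ι) (b : B) : 0 ≤ s6w lam α J b :=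
  div_nonneg (lam α b).2.1 (add_nonneg (lam α b).2.1 (s6vsum_nonneg lam J b))

/-- The reparametrised interpolation weight, clamped to vanish below `1/2` and equal `1`
above `3/4`. -/
noncomputable def s6u (lam : ι → B → I) (α : ι) (J : Set ι) (b : B) : I :=
  ⟨min 1 (max 0 (4 * s6w lam α J b - 2)),
    Set.mem_Icc.mpr ⟨le_min zero_le_one (le_max_left _ _), min_le_left _ _⟩⟩

theorem s6u_inv {lam : ι → B → I}
    (hlaminv : ∀ j (g₀ : G) (b : B), lam j (g₀ • b) = lam j b)
    (α : ι) (J : Set ι) (g₀ : G) (b : B) : s6u lam α J (g₀ • b) = s6u lam α J b := by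
  unfold s6u
  exact Subtype.ext (by simp [s6w_inv G hlaminv])

theorem s6u_eq_zero {lam : ι → B → I} {α : ι} {J : Set ι} {b : B}
    (h : s6w lam α J b ≤ 1/2) : s6u lam α J b = 0 := by
  apply Subtype.ext
  show min 1 (max 0 (4 * s6w lam α J b - 2)) = (0:ℝ)
  have h1 : 4 * s6w lam α J b - 2 ≤ 0 := by linarith
  rw [max_eq_left h1, min_eq_right zero_le_one]

theorem s6u_eq_one {lam : ι → B → I} {α : ι} {J : Set ι} {b : B}
    (h : 3/4 ≤ s6w lam α J b) : s6u lam α J b = 1 := by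
  apply Subtype.ext
  show min 1 (max 0 (4 * s6w lam α J b - 2)) = (1:ℝ)
  have h1 : (1:ℝ) ≤ 4 * s6w lam α J b - 2 := by linarith
  rw [min_eq_left (h1.trans (le_max_right 0 _))]

/-- Totalisation of a map defined on a subset, with junk value outside. -/
noncomputable def s6tot (x0 : X) (W : Set B) (ψ : W → X) : B → X :=
  open Classical in fun b => if h : b ∈ W then ψ ⟨b, h⟩ else x0

theorem s6tot_eq (x0 : X) {W : Set B} (ψ : W → X) {b : B} (h : b ∈ W) :
    s6tot x0 W ψ b = ψ ⟨b, h⟩ := by unfold s6tot; rw [dif_pos h]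

theorem s6tot_continuousOn (x0 : X) {W : Set B} {ψ : W → X} (hψ : Continuous ψ) :
    ContinuousOn (s6tot x0 W ψ) W := by
  rw [continuousOn_iff_continuous_restrict]
  have : W.restrict (s6tot x0 W ψ) = ψ := funext fun w => s6tot_eq x0 ψ w.2
  show Continuous (W.restrict (s6tot x0 W ψ)); rw [this]; exact hψ

/-- Combination of three maps according to the weight function. -/
noncomputable def s6phi (lam : ι → B → I) (α : ι) (J : Set ι)
    (PsiT KT PsiaT : B → X) (b : B) : X :=
  open Classical in
  if s6w lam α J b ≤ 3/4 then (if s6w lam α J b ≤ 1/2 then PsiT b else KT b) else PsiaT b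

theorem s6closure_le {O : Set B} (hO : IsOpen O) {wf : B → ℝ} (hw : ContinuousOn wf O)
    {c : ℝ} {b : B} (hb : b ∈ O) (hcl : b ∈ closure {x | wf x ≤ c}) : wf b ≤ c := by
  by_contra h
  have hca : ContinuousAt wf b := hw.continuousAt (hO.mem_nhds hb)
  have hnb : wf ⁻¹' Set.Ioi c ∈ nhds b := hca (Ioi_mem_nhds (not_le.1 h))
  obtain ⟨x, hx1, hx2⟩ := mem_closure_iff_nhds.1 hcl _ hnb
  have hx2' : wf x ≤ c := hx2
  have hx1' : c < wf x := hx1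
  linarith

theorem s6closure_ge {O : Set B} (hO : IsOpen O) {wf : B → ℝ} (hw : ContinuousOn wf O)
    {c : ℝ} {b : B} (hb : b ∈ O) (hcl : b ∈ closure {x | ¬ wf x ≤ c}) : c ≤ wf b := by
  by_contra h
  have hca : ContinuousAt wf b := hw.continuousAt (hO.mem_nhds hb)
  have hnb : wf ⁻¹' Set.Iio c ∈ nhds b := hca (Iio_mem_nhds (not_le.1 h))
  obtain ⟨x, hx1, hx2⟩ := mem_closure_iff_nhds.1 hcl _ hnb
  exact hx2 (le_of_lt hx1)

theorem s6frontier_eq {O : Set B} (hO : IsOpen O) {wf : B → ℝ} (hw : ContinuousOn wf O)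
    {c : ℝ} {b : B} (hb : b ∈ O) (hfr : b ∈ frontier {x | wf x ≤ c}) : wf b = c := by
  refine le_antisymm (s6closure_le hO hw hb hfr.1) (s6closure_ge hO hw hb ?_)
  have h2 : b ∈ closure ({x | wf x ≤ c} : Set B)ᶜ := by
    rw [closure_compl]; exact hfr.2
  exact h2

/-- Restriction of a partial solution to a smaller subset is a partial solution. -/
theorem s6restrict {i : A → B} {p : X → Y} {f : A → X} {g : B → Y}
    {W W' : Set B} (hsub : W' ⊆ W) {ψ : W → X}
    (hψ : IsPartialSolution G i p f g W ψ) :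
    IsPartialSolution G i p f g W' (fun w => ψ ⟨w.1, hsub w.2⟩) := by
  obtain ⟨hc, he, hpg, hif⟩ := hψ
  refine ⟨hc.comp (Continuous.subtype_mk continuous_subtype_val _), ?_, ?_, ?_⟩
  · intro g₀ w w' hww'
    exact he g₀ ⟨w.1, hsub w.2⟩ ⟨w'.1, hsub w'.2⟩ hww'
  · intro w; exact hpg ⟨w.1, hsub w.2⟩
  · intro a ha; exact hif a (hsub ha)


/-- The inductive step: a partial solution on `⋃_{β∈J} U_β` can be modified on `U_α` to give a
partial solution on `⋃_{β ∈ insert α J} U_β` which agrees with the old one where `λ_α = 0`. -/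
theorem s6step {i : A → B} {p : X → Y} {f : A → X} {g : B → Y}
    {U : ι → Set B} {lam : ι → B → I}
    (hUopen : ∀ j, IsOpen (U j)) (hcov : ∀ b, ∃ j, b ∈ U j) (hLF : LocallyFinite U)
    (hlamc : ∀ j, Continuous (lam j))
    (hlaminv : ∀ j (g₀ : G) (b : B), lam j (g₀ • b) = lam j b)
    (hlamU : ∀ j, U j = {b | 0 < lam j b})
    (x0 : X) (J : Set ι) (α : ι)
    (ψ : (⋃ β ∈ J, U β : Set B) → X)
    (hψ : IsPartialSolution G i p f g (⋃ β ∈ J, U β) ψ)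
    (ψa : (U α ∩ ⋃ β ∈ (Set.univ : Set ι), U β : Set B) → X)
    (hψa : IsPartialSolution G i p f g (U α ∩ ⋃ β ∈ (Set.univ : Set ι), U β) ψa)
    (huniq : ∀ (ψ₁ ψ₂ : (U α ∩ ⋃ β ∈ J, U β : Set B) → X),
      IsPartialSolution G i p f g (U α ∩ ⋃ β ∈ J, U β) ψ₁ →
      IsPartialSolution G i p f g (U α ∩ ⋃ β ∈ J, U β) ψ₂ →
        ∃ K : (U α ∩ ⋃ β ∈ J, U β : Set B) × I → X, Continuous K ∧
          (∀ (g₀ : G) (w w' : (U α ∩ ⋃ β ∈ J, U β : Set B)) (t : I),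
            (w' : B) = g₀ • (w : B) → K (w', t) = g₀ • K (w, t)) ∧
          (∀ w, K (w, 0) = ψ₁ w) ∧ (∀ w, K (w, 1) = ψ₂ w) ∧
          (∀ w t, p (K (w, t)) = g (w : B)) ∧
          ∀ (a : A) (ha : i a ∈ (U α ∩ ⋃ β ∈ J, U β : Set B)) (t : I),
            K (⟨i a, ha⟩, t) = f a) :
    ∃ φ : (⋃ β ∈ insert α J, U β : Set B) → X,
      IsPartialSolution G i p f g (⋃ β ∈ insert α J, U β) φ ∧
      ∀ (b : B) (hb : b ∈ ⋃ β ∈ J, U β) (hb' : b ∈ ⋃ β ∈ insert α J, U β),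
        lam α b = 0 → φ ⟨b, hb'⟩ = ψ ⟨b, hb⟩ := by
  classical
  have huniv : ∀ b : B, b ∈ ⋃ β ∈ (Set.univ : Set ι), U β := by
    intro b; obtain ⟨j, hj⟩ := hcov b; exact Set.mem_biUnion (Set.mem_univ j) hj
  have hOeq : (⋃ β ∈ insert α J, U β : Set B) = U α ∪ ⋃ β ∈ J, U β :=
    Set.biUnion_insert α J U
  have hOopen : IsOpen (⋃ β ∈ insert α J, U β : Set B) :=
    isOpen_biUnion fun β _ => hUopen β
  have hApos : ∀ b : B, b ∈ U α ↔ 0 < (lam α b : ℝ) := by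
    intro b
    rw [hlamU α]
    exact ⟨fun h => by exact_mod_cast h, fun h => by exact_mod_cast h⟩
  have hden : ∀ b ∈ (⋃ β ∈ insert α J, U β : Set B), 0 < (lam α b : ℝ) + s6vsum lam J b := by
    intro b hb
    rw [hOeq] at hb
    rcases hb with hb | hb
    · exact add_pos_of_pos_of_nonneg ((hApos b).1 hb) (s6vsum_nonneg lam J b)
    · exact add_pos_of_nonneg_of_pos (lam α b).2.1 ((s6vsum_pos_iff hLF hlamU J b).2 hb)
  have hwV : ∀ b ∈ (⋃ β ∈ insert α J, U β : Set B), s6w lam α J b < 1 → b ∈ ⋃ β ∈ J, U β := by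
    intro b hb hw
    rw [s6w, div_lt_one (hden b hb)] at hw
    have h2 : 0 < s6vsum lam J b := by linarith
    exact (s6vsum_pos_iff hLF hlamU J b).1 h2
  have hw0 : ∀ b : B, lam α b = 0 → s6w lam α J b = 0 := by
    intro b h
    rw [s6w, show ((lam α b : ℝ)) = 0 by rw [h]; rfl, zero_div]
  have hwA : ∀ b ∈ (⋃ β ∈ insert α J, U β : Set B), 0 < s6w lam α J b → b ∈ U α := by
    intro b hb hw
    rcases LE.le.eq_or_lt' ((lam α b).2.1 : (0:ℝ) ≤ (lam α b : ℝ)) with h | h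
    · exfalso; rw [hw0 b (Subtype.ext (show (lam α b : ℝ) = ((0:I):ℝ) by exact h))] at hw; exact lt_irrefl 0 hw
    · exact (hApos b).2 h
  have hwcont : ContinuousOn (s6w lam α J) (⋃ β ∈ insert α J, U β) := by
    apply ContinuousOn.div
    · exact (continuous_induced_dom.comp (hlamc α)).continuousOn
    · exact ((continuous_induced_dom.comp (hlamc α)).add
        (s6vsum_continuous hLF hlamU hlamc J)).continuousOn
    · intro b hb; exact ne_of_gt (hden b hb)
  have hsub1 : (U α ∩ ⋃ β ∈ J, U β) ⊆ ⋃ β ∈ J, U β := fun b hb => hb.2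
  have hsub2 : (U α ∩ ⋃ β ∈ J, U β) ⊆ U α ∩ ⋃ β ∈ (Set.univ : Set ι), U β := fun b hb => ⟨hb.1, huniv b⟩
  obtain ⟨K, hKc, hKeq, hK0, hK1, hKp, hKi⟩ :=
    huniq (fun w => ψ ⟨w.1, hsub1 w.2⟩) (fun w => ψa ⟨w.1, hsub2 w.2⟩)
      (s6restrict G hsub1 hψ) (s6restrict G hsub2 hψa)
  set PsiT : B → X := s6tot x0 (⋃ β ∈ J, U β) ψ with hPsiT
  set KT : B → X := s6tot x0 (U α ∩ ⋃ β ∈ J, U β) (fun w => K (w, s6u lam α J w.1)) with hKT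
  set PsiaT : B → X := s6tot x0 (U α) (fun w => ψa ⟨w.1, ⟨w.2, huniv w.1⟩⟩) with hPsiaT
  set phiT : B → X := s6phi lam α J PsiT KT PsiaT with hphiT
  have hval_lo : ∀ b ∈ (⋃ β ∈ insert α J, U β : Set B), s6w lam α J b ≤ 1/2 → ∃ hbV : b ∈ ⋃ β ∈ J, U β, phiT b = ψ ⟨b, hbV⟩ := by
    intro b hb h12
    have hbV : b ∈ ⋃ β ∈ J, U β := hwV b hb (lt_of_le_of_lt h12 (by norm_num))
    refine ⟨hbV, ?_⟩
    rw [hphiT]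
    unfold s6phi
    rw [if_pos (h12.trans (by norm_num)), if_pos h12]
    exact s6tot_eq x0 ψ hbV
  have hval_mid : ∀ b ∈ (⋃ β ∈ insert α J, U β : Set B), ¬ s6w lam α J b ≤ 1/2 → s6w lam α J b ≤ 3/4 →
      ∃ hbW : b ∈ U α ∩ ⋃ β ∈ J, U β, phiT b = K (⟨b, hbW⟩, s6u lam α J b) := by
    intro b hb h12 h34
    have hbA : b ∈ U α := hwA b hb (lt_trans (by norm_num) (not_le.1 h12))
    have hbV : b ∈ ⋃ β ∈ J, U β := hwV b hb (lt_of_le_of_lt h34 (by norm_num))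
    refine ⟨⟨hbA, hbV⟩, ?_⟩
    rw [hphiT]
    unfold s6phi
    rw [if_pos h34, if_neg h12]
    exact s6tot_eq x0 (fun w => K (w, s6u lam α J w.1)) ⟨hbA, hbV⟩
  have hval_hi : ∀ b ∈ (⋃ β ∈ insert α J, U β : Set B), ¬ s6w lam α J b ≤ 3/4 →
      ∃ hbA : b ∈ U α, phiT b = ψa ⟨b, ⟨hbA, huniv b⟩⟩ := by
    intro b hb h34
    have hbA : b ∈ U α := hwA b hb (lt_trans (by norm_num) (not_le.1 h34))
    refine ⟨hbA, ?_⟩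
    rw [hphiT]
    unfold s6phi
    rw [if_neg h34]
    exact s6tot_eq x0 (fun w => ψa ⟨w.1, ⟨w.2, huniv w.1⟩⟩) hbA
  have hphiTc : ContinuousOn phiT (⋃ β ∈ insert α J, U β) := by
    rw [hphiT]
    unfold s6phi
    apply ContinuousOn.if
    · rintro b ⟨hbO, hbfr⟩
      have hw34 : s6w lam α J b = 3/4 := s6frontier_eq hOopen hwcont hbO hbfr
      have hbA : b ∈ U α := hwA b hbO (by rw [hw34]; norm_num)
      have hbV : b ∈ ⋃ β ∈ J, U β := hwV b hbO (by rw [hw34]; norm_num)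
      rw [if_neg (show ¬ s6w lam α J b ≤ 1/2 by rw [hw34]; norm_num)]
      rw [hKT, s6tot_eq x0 (fun w => K (w, s6u lam α J w.1)) (show b ∈ U α ∩ ⋃ β ∈ J, U β from ⟨hbA, hbV⟩), hPsiaT, s6tot_eq x0 (fun w => ψa ⟨w.1, ⟨w.2, huniv w.1⟩⟩) hbA]
      rw [s6u_eq_one (le_of_eq hw34.symm)]
      exact hK1 ⟨b, hbA, hbV⟩
    · apply ContinuousOn.if
      · rintro b ⟨⟨hbO, _⟩, hbfr⟩
        have hw12 : s6w lam α J b = 1/2 := s6frontier_eq hOopen hwcont hbO hbfr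
        have hbA : b ∈ U α := hwA b hbO (by rw [hw12]; norm_num)
        have hbV : b ∈ ⋃ β ∈ J, U β := hwV b hbO (by rw [hw12]; norm_num)
        rw [hPsiT, s6tot_eq x0 ψ hbV, hKT, s6tot_eq x0 (fun w => K (w, s6u lam α J w.1)) (show b ∈ U α ∩ ⋃ β ∈ J, U β from ⟨hbA, hbV⟩)]
        rw [s6u_eq_zero (le_of_eq hw12)]
        exact (hK0 ⟨b, hbA, hbV⟩).symm
      · have hsubV : ((⋃ β ∈ insert α J, U β) ∩ closure {a | s6w lam α J a ≤ 3/4}) ∩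
            closure {a | s6w lam α J a ≤ 1/2} ⊆ ⋃ β ∈ J, U β := by
          rintro b ⟨⟨hbO, _⟩, hbcl⟩
          exact hwV b hbO
            (lt_of_le_of_lt (s6closure_le hOopen hwcont hbO hbcl) (by norm_num))
        rw [hPsiT]
        exact (s6tot_continuousOn x0 hψ.1).mono hsubV
      · have hsubW : ((⋃ β ∈ insert α J, U β) ∩ closure {a | s6w lam α J a ≤ 3/4}) ∩
            closure {a | ¬ s6w lam α J a ≤ 1/2} ⊆ U α ∩ ⋃ β ∈ J, U β := by
          rintro b ⟨⟨hbO, hbcl34⟩, hbclg⟩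
          have h34 := s6closure_le hOopen hwcont hbO hbcl34
          have h12 := s6closure_ge hOopen hwcont hbO hbclg
          exact ⟨hwA b hbO (by linarith), hwV b hbO (by linarith)⟩
        rw [hKT]
        refine (s6tot_continuousOn x0 ?_).mono hsubW
        have hwr : Continuous (fun w : ↥(U α ∩ ⋃ β ∈ J, U β) => s6w lam α J w.1) :=
          (hwcont.mono (fun b hb => by rw [hOeq]; exact Set.mem_union_left _ hb.1)).restrict
        have hur : Continuous (fun w : ↥(U α ∩ ⋃ β ∈ J, U β) => s6u lam α J w.1) := by
          unfold s6u
          exact Continuous.subtype_mk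
            (continuous_const.min (continuous_const.max
              ((continuous_const.mul hwr).sub continuous_const))) _
        exact hKc.comp (continuous_id.prodMk hur)
    · have hsubA : (⋃ β ∈ insert α J, U β) ∩ closure {a | ¬ s6w lam α J a ≤ 3/4} ⊆ U α := by
        rintro b ⟨hbO, hbcl⟩
        have h34 := s6closure_ge hOopen hwcont hbO hbcl
        exact hwA b hbO (by linarith)
      rw [hPsiaT]
      refine (s6tot_continuousOn x0 ?_).mono hsubA
      exact hψa.1.comp (Continuous.subtype_mk continuous_subtype_val _)
  refine ⟨fun o => phiT o.1, ⟨?_, ?_, ?_, ?_⟩, ?_⟩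
  · exact continuousOn_iff_continuous_restrict.1 hphiTc
  · intro g₀ w w' hww'
    have hbO : (w : B) ∈ (⋃ β ∈ insert α J, U β : Set B) := w.2
    have hbO' : (w' : B) ∈ (⋃ β ∈ insert α J, U β : Set B) := w'.2
    show phiT (w' : B) = g₀ • phiT (w : B)
    have hwinv : s6w lam α J (w' : B) = s6w lam α J (w : B) := by
      rw [hww']; exact s6w_inv G hlaminv α J g₀ (w : B)
    have huinv : s6u lam α J (w' : B) = s6u lam α J (w : B) := by
      rw [hww']; exact s6u_inv G hlaminv α J g₀ (w : B)
    rcases le_or_gt (s6w lam α J (w : B)) (1/2) with h12 | h12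
    · obtain ⟨hbV, heq⟩ := hval_lo (w : B) hbO h12
      obtain ⟨hbV', heq'⟩ := hval_lo (w' : B) hbO' (by rw [hwinv]; exact h12)
      rw [heq, heq']
      exact hψ.2.1 g₀ ⟨(w : B), hbV⟩ ⟨(w' : B), hbV'⟩ hww'
    · rcases le_or_gt (s6w lam α J (w : B)) (3/4) with h34 | h34
      · obtain ⟨hbW, heq⟩ := hval_mid (w : B) hbO (not_le.2 h12) h34
        obtain ⟨hbW', heq'⟩ := hval_mid (w' : B) hbO'
          (by rw [hwinv]; exact not_le.2 h12) (by rw [hwinv]; exact h34)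
        rw [heq, heq', huinv]
        exact hKeq g₀ ⟨(w : B), hbW⟩ ⟨(w' : B), hbW'⟩ (s6u lam α J (w : B)) hww'
      · obtain ⟨hbA, heq⟩ := hval_hi (w : B) hbO (not_le.2 h34)
        obtain ⟨hbA', heq'⟩ := hval_hi (w' : B) hbO' (by rw [hwinv]; exact not_le.2 h34)
        rw [heq, heq']
        exact hψa.2.1 g₀ ⟨(w : B), ⟨hbA, huniv _⟩⟩ ⟨(w' : B), ⟨hbA', huniv _⟩⟩ hww'
  · intro w
    show p (phiT (w : B)) = g (w : B)
    rcases le_or_gt (s6w lam α J (w : B)) (1/2) with h12 | h12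
    · obtain ⟨hbV, heq⟩ := hval_lo (w : B) w.2 h12
      rw [heq]; exact hψ.2.2.1 ⟨(w : B), hbV⟩
    · rcases le_or_gt (s6w lam α J (w : B)) (3/4) with h34 | h34
      · obtain ⟨hbW, heq⟩ := hval_mid (w : B) w.2 (not_le.2 h12) h34
        rw [heq]; exact hKp ⟨(w : B), hbW⟩ (s6u lam α J (w : B))
      · obtain ⟨hbA, heq⟩ := hval_hi (w : B) w.2 (not_le.2 h34)
        rw [heq]; exact hψa.2.2.1 ⟨(w : B), ⟨hbA, huniv _⟩⟩
  · intro a ha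
    show phiT (i a) = f a
    rcases le_or_gt (s6w lam α J (i a)) (1/2) with h12 | h12
    · obtain ⟨hbV, heq⟩ := hval_lo (i a) ha h12
      rw [heq]; exact hψ.2.2.2 a hbV
    · rcases le_or_gt (s6w lam α J (i a)) (3/4) with h34 | h34
      · obtain ⟨hbW, heq⟩ := hval_mid (i a) ha (not_le.2 h12) h34
        rw [heq]; exact hKi a hbW (s6u lam α J (i a))
      · obtain ⟨hbA, heq⟩ := hval_hi (i a) ha (not_le.2 h34)
        rw [heq]; exact hψa.2.2.2 a ⟨hbA, huniv _⟩
  · intro b hb hb' h0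
    obtain ⟨hbV, heq⟩ := hval_lo b hb' (by rw [hw0 b h0]; norm_num)
    show phiT b = ψ ⟨b, hb⟩
    rw [heq]


/-- A partial solution defined on the union of a subfamily of the cover. -/
structure S6Sol (i : A → B) (p : X → Y) (f : A → X) (g : B → Y) (U : ι → Set B) :
    Type v where
  J : Set ι
  toFun : (⋃ β ∈ J, U β : Set B) → X
  sol : IsPartialSolution G i p f g (⋃ β ∈ J, U β) toFun

/-- The preorder on partial solutions used for Zorn's lemma: the index set grows, and the
solutions agree at points where the numeration functions of all new indices vanish. -/
def S6le {i : A → B} {p : X → Y} {f : A → X} {g : B → Y} {U : ι → Set B}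
    (lam : ι → B → I) (s t : S6Sol G i p f g U) : Prop :=
  ∃ h : s.J ⊆ t.J, ∀ (b : B) (hb : b ∈ ⋃ β ∈ s.J, U β),
    (∀ β ∈ t.J, β ∉ s.J → lam β b = 0) →
      t.toFun ⟨b, Set.biUnion_subset_biUnion_left h hb⟩ = s.toFun ⟨b, hb⟩

theorem S6le_trans {i : A → B} {p : X → Y} {f : A → X} {g : B → Y} {U : ι → Set B}
    {lam : ι → B → I} {s t u : S6Sol G i p f g U}
    (h1 : S6le G lam s t) (h2 : S6le G lam t u) : S6le G lam s u := by
  obtain ⟨hst, hvst⟩ := h1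
  obtain ⟨htu, hvtu⟩ := h2
  refine ⟨hst.trans htu, ?_⟩
  intro b hb hlam
  have hbt : b ∈ ⋃ β ∈ t.J, U β := Set.biUnion_subset_biUnion_left hst hb
  have e1 := hvtu b hbt (fun β hβu hβt => hlam β hβu (fun hβs => hβt (hst hβs)))
  have e2 := hvst b hb (fun β hβt hβs => hlam β (htu hβt) hβs)
  exact e1.trans e2

theorem s6sol_empty {i : A → B} {p : X → Y} {f : A → X} {g : B → Y} (U : ι → Set B) :
    ∃ s : S6Sol G i p f g U, s.J = ∅ := by
  have hempty : ∀ b : B, b ∉ (⋃ β ∈ (∅ : Set ι), U β : Set B) := by simp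
  refine ⟨⟨∅, fun w => absurd w.2 (hempty w.1), ?_, ?_, ?_, ?_⟩, rfl⟩
  · exact continuous_iff_continuousAt.2 fun w => absurd w.2 (hempty w.1)
  · exact fun g₀ w => absurd w.2 (hempty w.1)
  · exact fun w => absurd w.2 (hempty w.1)
  · exact fun a ha => absurd ha (hempty (i a))

/-- Chains of partial solutions have upper bounds. -/
theorem s6chain {i : A → B} {p : X → Y} {f : A → X} {g : B → Y}
    {U : ι → Set B} {lam : ι → B → I}
    (hUopen : ∀ j, IsOpen (U j)) (hLF : LocallyFinite U)
    (hlaminv : ∀ j (g₀ : G) (b : B), lam j (g₀ • b) = lam j b)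
    (hlamU : ∀ j, U j = {b | 0 < lam j b}) (x0 : X)
    (C : Set (S6Sol G i p f g U)) (hC : IsChain (S6le G lam) C) (hCne : C.Nonempty) :
    ∃ ub, ∀ s ∈ C, S6le G lam s ub := by
  classical
  have hJst : ∀ s ∈ C, s.J ⊆ ⋃ s ∈ C, S6Sol.J s :=
    fun s hs β hβ => Set.mem_biUnion hs hβ
  have hUinv : ∀ (j : ι) (g₀ : G) (b : B), b ∈ U j ↔ g₀ • b ∈ U j := by
    intro j g₀ b
    rw [hlamU j]
    simp only [Set.mem_setOf_eq, hlaminv]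
  have hfindF : ∀ (T : Finset ι), (↑T : Set ι) ⊆ ⋃ s ∈ C, S6Sol.J s →
      ∃ s ∈ C, (↑T : Set ι) ⊆ s.J := by
    intro T
    induction T using Finset.induction_on with
    | empty =>
      intro _
      obtain ⟨s, hs⟩ := hCne
      exact ⟨s, hs, by simp⟩
    | @insert β T hβT ih =>
      intro hsub
      obtain ⟨s₁, hs₁C, hs₁⟩ := ih (fun x hx => hsub (by simp [hx]))
      have hβ : β ∈ ⋃ s ∈ C, S6Sol.J s := hsub (by simp)
      obtain ⟨s₂, hs₂C, hβ₂⟩ := Set.mem_iUnion₂.1 hβ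
      rcases eq_or_ne s₁ s₂ with rfl | hne
      · refine ⟨s₁, hs₁C, ?_⟩
        intro x hx
        rcases Finset.mem_insert.1 (by exact_mod_cast hx) with rfl | hx'
        · exact hβ₂
        · exact hs₁ hx'
      · rcases hC hs₁C hs₂C hne with h | h
        · refine ⟨s₂, hs₂C, ?_⟩
          intro x hx
          rcases Finset.mem_insert.1 (by exact_mod_cast hx) with rfl | hx'
          · exact hβ₂
          · exact h.1 (hs₁ hx')
        · refine ⟨s₁, hs₁C, ?_⟩
          intro x hx
          rcases Finset.mem_insert.1 (by exact_mod_cast hx) with rfl | hx'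
          · exact h.1 hβ₂
          · exact hs₁ hx'
  have hfind : ∀ (S : Set ι), S.Finite → S ⊆ ⋃ s ∈ C, S6Sol.J s →
      ∃ s ∈ C, S ⊆ s.J := by
    intro S hS hsub
    obtain ⟨s, hsC, hs⟩ := hfindF hS.toFinset (by rw [hS.coe_toFinset]; exact hsub)
    exact ⟨s, hsC, by rw [← hS.coe_toFinset]; exact hs⟩
  have hFb : ∀ b : B, {β | b ∈ U β}.Finite := hLF.point_finite
  have hpick : ∀ b : B, b ∈ (⋃ β ∈ ⋃ s ∈ C, S6Sol.J s, U β : Set B) →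
      ∃ s ∈ C, ({β | b ∈ U β} ∩ ⋃ s ∈ C, S6Sol.J s) ⊆ s.J ∧ b ∈ ⋃ β ∈ s.J, U β := by
    intro b hb
    obtain ⟨s, hsC, hsub⟩ := hfind ({β | b ∈ U β} ∩ ⋃ s ∈ C, S6Sol.J s)
      ((hFb b).inter_of_left _) Set.inter_subset_right
    obtain ⟨β, hβJst, hβ⟩ := Set.mem_iUnion₂.1 hb
    exact ⟨s, hsC, hsub, Set.mem_biUnion (hsub ⟨hβ, hβJst⟩) hβ⟩
  choose sfun hsmemC hsF hsV using hpick
  have hcoh : ∀ (b : B) (s t : S6Sol G i p f g U), s ∈ C → t ∈ C →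
      ({β | b ∈ U β} ∩ ⋃ s ∈ C, S6Sol.J s) ⊆ s.J →
      ({β | b ∈ U β} ∩ ⋃ s ∈ C, S6Sol.J s) ⊆ t.J →
      ∀ (hbs : b ∈ ⋃ β ∈ s.J, U β) (hbt : b ∈ ⋃ β ∈ t.J, U β),
        s.toFun ⟨b, hbs⟩ = t.toFun ⟨b, hbt⟩ := by
    have key : ∀ (b : B) (s' t' : S6Sol G i p f g U), s' ∈ C → t' ∈ C →
        ({β | b ∈ U β} ∩ ⋃ s ∈ C, S6Sol.J s) ⊆ s'.J →
        S6le G lam s' t' → ∀ (hbs' : b ∈ ⋃ β ∈ s'.J, U β)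
          (hbt' : b ∈ ⋃ β ∈ t'.J, U β),
        t'.toFun ⟨b, hbt'⟩ = s'.toFun ⟨b, hbs'⟩ := by
      intro b s' t' hs'C ht'C hFs' hle hbs' hbt'
      obtain ⟨hsub, hval⟩ := hle
      exact hval b hbs' (fun β hβt hβs => by
        by_contra hne0
        have hpos : 0 < lam β b := lt_of_le_of_ne unitInterval.nonneg' (Ne.symm hne0)
        have hbU : b ∈ U β := by rw [hlamU β]; exact hpos
        exact hβs (hFs' ⟨hbU, hJst t' ht'C hβt⟩))
    intro b s t hsC htC hFs hFt hbs hbt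
    rcases eq_or_ne s t with rfl | hne
    · rfl
    · rcases hC hsC htC hne with h | h
      · exact (key b s t hsC htC hFs h hbs hbt).symm
      · exact key b t s htC hsC hFt h hbt hbs
  refine ⟨⟨⋃ s ∈ C, S6Sol.J s, fun w => (sfun w.1 w.2).toFun ⟨w.1, hsV w.1 w.2⟩,
    ?_, ?_, ?_, ?_⟩, ?_⟩
  · -- continuity
    rw [continuous_iff_continuousAt]
    intro w
    obtain ⟨N, hN, hNfin⟩ := hLF w.1
    obtain ⟨s, hsC, hsubs⟩ := hfind ({β | (U β ∩ N).Nonempty} ∩ ⋃ s ∈ C, S6Sol.J s)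
      (hNfin.inter_of_left _) Set.inter_subset_right
    have hmemS : ∀ (b' : B), b' ∈ N → b' ∈ (⋃ β ∈ ⋃ s ∈ C, S6Sol.J s, U β : Set B) →
        b' ∈ ⋃ β ∈ s.J, U β := by
      intro b' hb'N hb'
      obtain ⟨β, hβJst, hβ⟩ := Set.mem_iUnion₂.1 hb'
      exact Set.mem_biUnion (hsubs ⟨⟨b', hβ, hb'N⟩, hβJst⟩) hβ
    have hkey : ∀ (b' : B), b' ∈ N → ∀ (hb' : b' ∈ ⋃ β ∈ ⋃ s ∈ C, S6Sol.J s, U β)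
        (hb's : b' ∈ ⋃ β ∈ s.J, U β),
        (sfun b' hb').toFun ⟨b', hsV b' hb'⟩ = s.toFun ⟨b', hb's⟩ := by
      intro b' hb'N hb' hb's
      refine hcoh b' (sfun b' hb') s (hsmemC b' hb') hsC (hsF b' hb') ?_
        (hsV b' hb') hb's
      intro β hβ
      exact hsubs ⟨⟨b', hβ.1, hb'N⟩, hβ.2⟩
    have hTc : ContinuousAt (s6tot x0 (⋃ β ∈ s.J, U β) s.toFun) w.1 := by
      apply (s6tot_continuousOn x0 s.sol.1).continuousAt
      exact (isOpen_biUnion fun β _ => hUopen β).mem_nhds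
        (hmemS w.1 (mem_of_mem_nhds hN) w.2)
    have hca : ContinuousAt
        (fun w' : ↥(⋃ β ∈ ⋃ s ∈ C, S6Sol.J s, U β) =>
          s6tot x0 (⋃ β ∈ s.J, U β) s.toFun w'.1) w :=
      hTc.comp continuous_subtype_val.continuousAt
    apply hca.congr
    have hNw : (Subtype.val ⁻¹' N : Set ↥(⋃ β ∈ ⋃ s ∈ C, S6Sol.J s, U β)) ∈ nhds w :=
      continuous_subtype_val.continuousAt.preimage_mem_nhds hN
    filter_upwards [hNw] with w' hw'
    rw [s6tot_eq x0 s.toFun (hmemS w'.1 hw' w'.2)]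
    exact (hkey w'.1 hw' w'.2 (hmemS w'.1 hw' w'.2)).symm
  · -- equivariance
    intro g₀ w w' hww'
    have hFinv : {β | (w' : B) ∈ U β} = {β | (w : B) ∈ U β} := by
      ext β
      simp only [Set.mem_setOf_eq, hww']
      exact (hUinv β g₀ w.1).symm
    have hwmem' : (w' : B) ∈ ⋃ β ∈ (sfun w.1 w.2).J, U β := by
      obtain ⟨β, hβ, hmem⟩ := Set.mem_iUnion₂.1 (hsV w.1 w.2)
      refine Set.mem_biUnion hβ ?_
      rw [hww']
      exact (hUinv β g₀ w.1).1 hmem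
    have h1 : (sfun w'.1 w'.2).toFun ⟨w'.1, hsV w'.1 w'.2⟩ =
        (sfun w.1 w.2).toFun ⟨w'.1, hwmem'⟩ := by
      refine hcoh w'.1 (sfun w'.1 w'.2) (sfun w.1 w.2) (hsmemC w'.1 w'.2)
        (hsmemC w.1 w.2) (hsF w'.1 w'.2) ?_ (hsV w'.1 w'.2) hwmem'
      rw [show ({β | (w' : B) ∈ U β} ∩ ⋃ s ∈ C, S6Sol.J s)
        = ({β | (w : B) ∈ U β} ∩ ⋃ s ∈ C, S6Sol.J s) by rw [hFinv]]
      exact hsF w.1 w.2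
    show (sfun w'.1 w'.2).toFun ⟨w'.1, hsV w'.1 w'.2⟩ =
        g₀ • (sfun w.1 w.2).toFun ⟨w.1, hsV w.1 w.2⟩
    rw [h1]
    exact (sfun w.1 w.2).sol.2.1 g₀ ⟨w.1, hsV w.1 w.2⟩ ⟨w'.1, hwmem'⟩ hww'
  · intro w
    exact (sfun w.1 w.2).sol.2.2.1 ⟨w.1, hsV w.1 w.2⟩
  · intro a ha
    exact (sfun (i a) ha).sol.2.2.2 a (hsV (i a) ha)
  · -- upper bound
    intro s hsC'
    refine ⟨hJst s hsC', ?_⟩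
    intro b hb hlam
    have hbJ : b ∈ (⋃ β ∈ ⋃ s ∈ C, S6Sol.J s, U β : Set B) :=
      Set.biUnion_subset_biUnion_left (hJst s hsC') hb
    show (sfun b hbJ).toFun ⟨b, hsV b hbJ⟩ = s.toFun ⟨b, hb⟩
    rcases eq_or_ne (sfun b hbJ) s with heq | hne
    · subst heq; rfl
    · rcases hC (hsmemC b hbJ) hsC' hne with h | h
      · obtain ⟨hsub, hval⟩ := h
        have := hval b (hsV b hbJ) (fun β hβs hβt => by
          by_contra h0
          have hpos : 0 < lam β b := lt_of_le_of_ne unitInterval.nonneg' (Ne.symm h0)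
          have hbU : b ∈ U β := by rw [hlamU β]; exact hpos
          exact hβt (hsF b hbJ ⟨hbU, hJst s hsC' hβs⟩))
        exact this.symm
      · obtain ⟨hsub, hval⟩ := h
        exact hval b hb (fun β hβt hβs =>
          hlam β (hJst (sfun b hbJ) (hsmemC b hbJ) hβt) hβs)

end Statement6Aux

/-- the local-to-global lifting lemma.  If `B` admits a `G`-numerable open cover
such that, for each member `U_α` of the cover and each subset `J` of the index set, partial
solutions of the lifting problem exist on `U_α ∩ ⋃_{β ∈ J} U_β` and are unique up to
`G`-homotopy relative to `p` and `i`, then the lifting problem has a global solution. -/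
theorem statement6 {A B X Y : Type v}
    [TopologicalSpace A] [MulAction G A] [ContinuousSMul G A]
    [TopologicalSpace B] [MulAction G B] [ContinuousSMul G B]
    [TopologicalSpace X] [MulAction G X] [ContinuousSMul G X]
    [TopologicalSpace Y] [MulAction G Y] [ContinuousSMul G Y]
    (i : A → B) (p : X → Y) (f : A → X) (g : B → Y)
    (hi : IsGMap G i) (hp : IsGMap G p) (hf : IsGMap G f) (hg : IsGMap G g)
    (hsq : ∀ a, p (f a) = g (i a))
    {ι : Type v} (U : ι → Set B) (hU : IsGNumerableCover G U)
    (hexists : ∀ (α : ι) (J : Set ι),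
      ∃ ψ : (U α ∩ ⋃ β ∈ J, U β : Set B) → X, IsPartialSolution G i p f g _ ψ)
    (huniq : ∀ (α : ι) (J : Set ι)
      (ψ₁ ψ₂ : (U α ∩ ⋃ β ∈ J, U β : Set B) → X),
      IsPartialSolution G i p f g _ ψ₁ → IsPartialSolution G i p f g _ ψ₂ →
        ∃ K : (U α ∩ ⋃ β ∈ J, U β : Set B) × I → X, Continuous K ∧
          (∀ (g₀ : G) (w w' : (U α ∩ ⋃ β ∈ J, U β : Set B)) (t : I),
            (w' : B) = g₀ • (w : B) → K (w', t) = g₀ • K (w, t)) ∧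
          (∀ w, K (w, 0) = ψ₁ w) ∧ (∀ w, K (w, 1) = ψ₂ w) ∧
          (∀ w t, p (K (w, t)) = g (w : B)) ∧
          ∀ (a : A) (ha : i a ∈ (U α ∩ ⋃ β ∈ J, U β : Set B)) (t : I),
            K (⟨i a, ha⟩, t) = f a) :
    ∃ ψ : B → X, IsGMap G ψ ∧ (∀ b, p (ψ b) = g b) ∧ ∀ a, ψ (i a) = f a := by
  classical
  obtain ⟨hUopen, hcov, hLF, hnum⟩ := hU
  choose lam hlamc hlaminv hlamU using hnum
  rcases isEmpty_or_nonempty B with hBe | hBne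
  · refine ⟨fun b => (IsEmpty.false b).elim, ⟨?_, ?_⟩, ?_, ?_⟩
    · exact continuous_iff_continuousAt.2 fun b => (IsEmpty.false b).elim
    · exact fun g₀ b => (IsEmpty.false b).elim
    · exact fun b => (IsEmpty.false b).elim
    · exact fun a => (IsEmpty.false (i a)).elim
  · obtain ⟨b₀⟩ := hBne
    obtain ⟨α₀, hα₀⟩ := hcov b₀
    have huniv : ∀ b : B, b ∈ ⋃ β ∈ (Set.univ : Set ι), U β := fun b => by
      obtain ⟨j, hj⟩ := hcov b
      exact Set.mem_biUnion (Set.mem_univ j) hj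
    obtain ⟨ψ₀, hψ₀⟩ := hexists α₀ Set.univ
    have x0 : X := ψ₀ ⟨b₀, ⟨hα₀, huniv b₀⟩⟩
    have hbound : ∀ c : Set (S6Sol G i p f g U), IsChain (S6le G lam) c →
        ∃ ub, ∀ a ∈ c, S6le G lam a ub := by
      intro c hc
      rcases c.eq_empty_or_nonempty with rfl | hne
      · obtain ⟨s, -⟩ := s6sol_empty G (i := i) (p := p) (f := f) (g := g) U
        exact ⟨s, fun a ha => absurd ha (Set.notMem_empty a)⟩
      · exact s6chain G hUopen hLF hlaminv hlamU x0 c hc hne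
    obtain ⟨m, hm⟩ := exists_maximal_of_chains_bounded hbound
      (fun {a b c} h1 h2 => S6le_trans G h1 h2)
    have hall : ∀ α : ι, α ∈ m.J := by
      intro α
      by_contra hα
      obtain ⟨ψa, hψa⟩ := hexists α Set.univ
      obtain ⟨φ, hφ, hagree⟩ := s6step G hUopen hcov hLF hlamc hlaminv hlamU x0 m.J α
        m.toFun m.sol ψa hψa (huniq α m.J)
      have hle : S6le G lam m ⟨insert α m.J, φ, hφ⟩ := by
        refine ⟨Set.subset_insert α m.J, ?_⟩
        intro b hb hlam
        exact hagree b hb _ (hlam α (Set.mem_insert α m.J) hα)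
      exact hα ((hm _ hle).1 (Set.mem_insert α m.J))
    have hmem : ∀ b : B, b ∈ ⋃ β ∈ m.J, U β := fun b => by
      obtain ⟨j, hj⟩ := hcov b
      exact Set.mem_biUnion (hall j) hj
    refine ⟨fun b => m.toFun ⟨b, hmem b⟩, ⟨?_, ?_⟩, ?_, ?_⟩
    · exact m.sol.1.comp (Continuous.subtype_mk continuous_id _)
    · intro g₀ b
      exact m.sol.2.1 g₀ ⟨b, hmem b⟩ ⟨g₀ • b, hmem _⟩ rfl
    · intro b
      exact m.sol.2.2.1 ⟨b, hmem b⟩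
    · intro a
      exact m.sol.2.2.2 a (hmem (i a))
end
end

section
/- Let p: X → Y be a G-map and suppose there exists a cover of Y by G-invariant open sets {U_i}_{i ∈ I} such that each restriction p: p⁻¹(U_i) → U_i is a C-fibration. Then p is a C-fibration. -/
open unitInterval Pointwise

noncomputable section

universe u v w x

variable (G : Type u) [Group G]

variable [TopologicalSpace G]

variable [IsTopologicalGroup G] [CompactSpace G]

namespace Stmt8


open Set

/-- Glue continuity over a union of two closed sets. -/
theorem contOn_union_closed {α β : Type*} [TopologicalSpace α] [TopologicalSpace β]
    {s t : Set α} (hs : IsClosed s) (ht : IsClosed t) {f : α → β}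
    (hfs : ContinuousOn f s) (hft : ContinuousOn f t) : ContinuousOn f (s ∪ t) := by
  intro x hx
  rcases hx with hxs | hxt
  · by_cases hxt : x ∈ t
    · exact ((hfs x hxs).union (hft x hxt))
    · exact ((hfs x hxs).union (continuousWithinAt_of_notMem_closure (by rwa [ht.closure_eq])))
  · by_cases hxs : x ∈ s
    · exact ((hfs x hxs).union (hft x hxt))
    · exact ((continuousWithinAt_of_notMem_closure (by rwa [hs.closure_eq])).union (hft x hxt))

/-- Glue two functions defined on closed sets agreeing on the overlap. -/
theorem glue_closed {α β : Type*} [TopologicalSpace α] [TopologicalSpace β]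
    {s t : Set α} (hs : IsClosed s) (ht : IsClosed t) {f g : α → β} [∀ x, Decidable (x ∈ s)]
    (hfs : ContinuousOn f s) (hgt : ContinuousOn g t)
    (hagree : ∀ x ∈ s ∩ t, f x = g x) :
    ContinuousOn (fun x => if x ∈ s then f x else g x) (s ∪ t) := by
  apply contOn_union_closed hs ht
  · exact hfs.congr (fun x hx => by simp [hx])
  · apply hgt.congr
    intro x hx
    by_cases hxs : x ∈ s
    · simp [hxs, hagree x ⟨hxs, hx⟩]
    · simp [hxs]

namespace SqHomeo

def sqS : Set (ℝ × ℝ) := {p | p.1 ∈ Icc (0:ℝ) 1 ∧ p.2 ∈ Icc (0:ℝ) 1}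

def bdS : Set (ℝ × ℝ) := {p | p ∈ sqS ∧ (p.1 = 0 ∨ p.1 = 1 ∨ p.2 = 0 ∨ p.2 = 1)}

def psid (p : ℝ × ℝ) : ℝ × ℝ :=
  if p.2 = 0 then ((1 + p.1)/2, 0)
  else if p.1 = 0 then ((1 - p.2)/2, 0)
  else if p.2 = 1 then (if p.1 ≤ 1/2 then (0, 2*p.1) else (2*p.1 - 1, 1))
  else (1, p.2)

def chid (p : ℝ × ℝ) : ℝ × ℝ :=
  if p.2 = 0 then (if 1/2 ≤ p.1 then (2*p.1 - 1, 0) else (0, 1 - 2*p.1))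
  else if p.1 = 0 then (p.2/2, 1)
  else if p.2 = 1 then ((p.1 + 1)/2, 1)
  else (1, p.2)

theorem psid_mem (p : ℝ × ℝ) (hp : p ∈ bdS) : psid p ∈ bdS := by
  obtain ⟨⟨⟨hx0, hx1⟩, ⟨hy0, hy1⟩⟩, hedge⟩ := hp
  unfold psid bdS sqS
  by_cases h1 : p.2 = 0
  · simp only [if_pos h1]; constructor
    · constructor <;> constructor <;> simp <;> linarith
    · simp
  · simp only [if_neg h1]
    by_cases h2 : p.1 = 0
    · simp only [if_pos h2]; constructor
      · constructor <;> constructor <;> simp <;> linarith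
      · simp
    · simp only [if_neg h2]
      by_cases h3 : p.2 = 1
      · simp only [if_pos h3]
        by_cases h4 : p.1 ≤ 1/2
        · simp only [if_pos h4]; constructor
          · constructor <;> constructor <;> simp <;> linarith
          · simp
        · simp only [if_neg h4]; constructor
          · constructor <;> constructor <;> simp <;> linarith
          · simp
      · simp only [if_neg h3]; constructor
        · constructor <;> constructor <;> simp <;> linarith
        · simp

theorem chid_mem (p : ℝ × ℝ) (hp : p ∈ bdS) : chid p ∈ bdS := by
  obtain ⟨⟨⟨hx0, hx1⟩, ⟨hy0, hy1⟩⟩, hedge⟩ := hp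
  unfold chid bdS sqS
  by_cases h1 : p.2 = 0
  · simp only [if_pos h1]
    by_cases h4 : (1:ℝ)/2 ≤ p.1
    · simp only [if_pos h4]; constructor
      · constructor <;> constructor <;> simp <;> linarith
      · simp
    · simp only [if_neg h4]; constructor
      · constructor <;> constructor <;> simp <;> linarith
      · simp
  · simp only [if_neg h1]
    by_cases h2 : p.1 = 0
    · simp only [if_pos h2]; constructor
      · constructor <;> constructor <;> simp <;> linarith
      · simp
    · simp only [if_neg h2]
      by_cases h3 : p.2 = 1
      · simp only [if_pos h3]; constructor
        · constructor <;> constructor <;> simp <;> linarith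
        · simp
      · simp only [if_neg h3]; constructor
        · constructor <;> constructor <;> simp <;> linarith
        · simp

theorem chid_psid (p : ℝ × ℝ) (hp : p ∈ bdS) : chid (psid p) = p := by
  obtain ⟨⟨⟨hx0, hx1⟩, ⟨hy0, hy1⟩⟩, hedge⟩ := hp
  unfold psid chid
  by_cases h1 : p.2 = 0
  · simp only [if_pos h1]
    have : (1:ℝ)/2 ≤ (1 + p.1)/2 := by linarith
    simp only [if_pos rfl, if_pos this]
    ext <;> simp <;> linarith [h1]
  · simp only [if_neg h1]
    by_cases h2 : p.1 = 0
    · simp only [if_pos h2]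
      have hy0' : 0 < p.2 := lt_of_le_of_ne hy0 (Ne.symm h1)
      have : ¬ ((1:ℝ)/2 ≤ (1 - p.2)/2) := by push_neg; linarith
      simp only [if_pos rfl, if_neg this]
      ext <;> simp <;> linarith
    · simp only [if_neg h2]
      by_cases h3 : p.2 = 1
      · simp only [if_pos h3]
        have hx0' : 0 < p.1 := lt_of_le_of_ne hx0 (Ne.symm h2)
        by_cases h4 : p.1 ≤ 1/2
        · simp only [if_pos h4]
          have c1 : ¬ (2 * p.1 = 0) := by positivity
          simp only [if_neg c1, if_pos rfl]
          ext <;> simp <;> linarith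
        · simp only [if_neg h4]
          push_neg at h4
          have c1 : ¬ ((1:ℝ) = 0) := one_ne_zero
          have c2 : ¬ (2 * p.1 - 1 = 0) := by intro h; apply h4.ne'; linarith
          simp only [if_neg c1, if_neg c2, if_pos rfl]
          ext <;> simp <;> linarith
      · -- right edge: p.1 = 1
        have hx : p.1 = 1 := by rcases hedge with h | h | h | h <;> first | exact h | exact absurd h h2 | exact absurd h h1 | exact absurd h h3
        simp only [if_neg h3]
        have c1 : ¬ (p.2 = 0) := h1
        have c2 : ¬ ((1:ℝ) = 0) := one_ne_zero
        simp only [if_neg c1, if_neg c2, if_neg h3]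
        ext <;> simp [hx]

theorem psid_chid (p : ℝ × ℝ) (hp : p ∈ bdS) : psid (chid p) = p := by
  obtain ⟨⟨⟨hx0, hx1⟩, ⟨hy0, hy1⟩⟩, hedge⟩ := hp
  unfold psid chid
  by_cases h1 : p.2 = 0
  · simp only [if_pos h1]
    by_cases h4 : (1:ℝ)/2 ≤ p.1
    · simp only [if_pos h4, if_pos rfl]
      ext <;> simp <;> linarith
    · push_neg at h4
      simp only [if_neg (not_le.mpr h4)]
      have c1 : ¬ (1 - 2*p.1 = 0) := by intro h; apply h4.ne; linarith
      simp only [if_neg c1, if_pos rfl]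
      ext <;> simp <;> linarith
  · simp only [if_neg h1]
    by_cases h2 : p.1 = 0
    · simp only [if_pos h2]
      have hy0' : 0 < p.2 := lt_of_le_of_ne hy0 (Ne.symm h1)
      have c1 : ¬ ((1:ℝ) = 0) := one_ne_zero
      have c2 : ¬ (p.2/2 = 0) := by positivity
      have c3 : p.2/2 ≤ 1/2 := by linarith
      simp only [if_neg c1, if_neg c2, if_pos rfl, if_pos c3]
      ext <;> simp <;> linarith
    · simp only [if_neg h2]
      by_cases h3 : p.2 = 1
      · simp only [if_pos h3]
        have hx0' : 0 < p.1 := lt_of_le_of_ne hx0 (Ne.symm h2)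
        have c1 : ¬ ((1:ℝ) = 0) := one_ne_zero
        have c2 : ¬ ((p.1+1)/2 = 0) := by positivity
        have c3 : ¬ ((p.1+1)/2 ≤ 1/2) := by push_neg; linarith
        simp only [if_neg c1, if_neg c2, if_pos rfl, if_neg c3]
        ext <;> simp <;> linarith
      · have hx : p.1 = 1 := by rcases hedge with h | h | h | h <;> first | exact h | exact absurd h h2 | exact absurd h h1 | exact absurd h h3
        simp only [if_neg h3, if_neg h1]
        have c2 : ¬ ((1:ℝ) = 0) := one_ne_zero
        simp only [if_neg c2, if_neg h3]
        ext <;> simp [hx]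

theorem psid_snd_eq_zero (p : ℝ × ℝ) (hp : p ∈ bdS) :
    (psid p).2 = 0 ↔ p.1 = 0 ∨ p.2 = 0 := by
  obtain ⟨⟨⟨hx0, hx1⟩, ⟨hy0, hy1⟩⟩, hedge⟩ := hp
  unfold psid
  by_cases h1 : p.2 = 0
  · simp [h1]
  · simp only [if_neg h1]
    by_cases h2 : p.1 = 0
    · simp [h2]
    · simp only [if_neg h2]
      by_cases h3 : p.2 = 1
      · simp only [if_pos h3]
        by_cases h4 : p.1 ≤ 1/2
        · simp only [if_pos h4]
          simp only [h3]
          constructor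
          · intro h; exact absurd (by linarith : p.1 = 0) h2
          · rintro (h | h); exact absurd h h2; norm_num at h
        · simp only [if_neg h4]
          constructor
          · intro h; norm_num at h
          · rintro (h | h); exact absurd h h2; exact absurd h h1
      · simp only [if_neg h3]
        constructor
        · intro h; exact absurd h h1
        · rintro (h | h)
          · exact absurd h h2
          · exact absurd h h1

theorem continuousOn_psid : ContinuousOn psid bdS := by
  have hbot : ContinuousOn psid {p : ℝ × ℝ | p.2 = 0} := by
    apply ContinuousOn.congr (f := fun p : ℝ × ℝ => (((1:ℝ) + p.1)/2, (0:ℝ)))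
    · exact (Continuous.continuousOn (by fun_prop))
    · intro p hp; simp only [Set.mem_setOf_eq] at hp; simp [psid, hp]
  have hleft : ContinuousOn psid {p : ℝ × ℝ | p.1 = 0} := by
    apply ContinuousOn.congr (f := fun p : ℝ × ℝ => (((1:ℝ) - p.2)/2, (0:ℝ)))
    · exact (Continuous.continuousOn (by fun_prop))
    · intro p hp; simp only [Set.mem_setOf_eq] at hp
      unfold psid
      by_cases h1 : p.2 = 0
      · simp [h1, hp]
      · simp [h1, hp]
  have htopaux : Continuous (fun p : ℝ × ℝ => if p.1 ≤ 1/2 then ((0:ℝ), 2*p.1) else (2*p.1 - 1, (1:ℝ))) := by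
    apply Continuous.if_le (by fun_prop) (by fun_prop) continuous_fst continuous_const
    intro p hp; rw [hp]; norm_num
  have htop : ContinuousOn psid {p : ℝ × ℝ | p.2 = 1} := by
    apply ContinuousOn.congr (f := fun p : ℝ × ℝ => if p.1 ≤ 1/2 then ((0:ℝ), 2*p.1) else (2*p.1 - 1, (1:ℝ)))
    · exact htopaux.continuousOn
    · intro p hp; simp only [Set.mem_setOf_eq] at hp
      unfold psid
      have h1 : ¬ (p.2 = 0) := by rw [hp]; norm_num
      simp only [if_neg h1, if_pos hp]
      by_cases h2 : p.1 = 0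
      · simp [h2, hp]
      · simp [h2]
  have hright : ContinuousOn psid {p : ℝ × ℝ | p.1 = 1} := by
    apply ContinuousOn.congr (f := fun p : ℝ × ℝ => ((1:ℝ), p.2))
    · exact (Continuous.continuousOn (by fun_prop))
    · intro p hp; simp only [Set.mem_setOf_eq] at hp
      unfold psid
      by_cases h1 : p.2 = 0
      · simp [h1, hp]
      · have h2 : ¬ (p.1 = 0) := by rw [hp]; norm_num
        by_cases h3 : p.2 = 1
        · have : ¬ (p.1 ≤ 1/2) := by rw [hp]; norm_num
          simp [h1, h2, h3, this, hp]
          norm_num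
        · simp [h1, h2, h3]
  have hsub : bdS ⊆ ({p : ℝ × ℝ | p.2 = 0} ∪ {p : ℝ × ℝ | p.1 = 0}) ∪ ({p : ℝ × ℝ | p.2 = 1} ∪ {p : ℝ × ℝ | p.1 = 1}) := by
    rintro p ⟨_, h | h | h | h⟩ <;> simp [h]
  have c1 : IsClosed {p : ℝ × ℝ | p.2 = 0} := isClosed_eq (by fun_prop) continuous_const
  have c2 : IsClosed {p : ℝ × ℝ | p.1 = 0} := isClosed_eq (by fun_prop) continuous_const
  have c3 : IsClosed {p : ℝ × ℝ | p.2 = 1} := isClosed_eq (by fun_prop) continuous_const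
  have c4 : IsClosed {p : ℝ × ℝ | p.1 = 1} := isClosed_eq (by fun_prop) continuous_const
  exact (contOn_union_closed (c1.union c2) (c3.union c4)
    (contOn_union_closed c1 c2 hbot hleft) (contOn_union_closed c3 c4 htop hright)).mono hsub

theorem continuousOn_chid : ContinuousOn chid bdS := by
  have hbotaux : Continuous (fun p : ℝ × ℝ => if 1/2 ≤ p.1 then (2*p.1 - 1, (0:ℝ)) else ((0:ℝ), 1 - 2*p.1)) := by
    apply Continuous.if_le (by fun_prop) (by fun_prop) continuous_const continuous_fst
    intro p hp; rw [← hp]; norm_num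
  have hbot : ContinuousOn chid {p : ℝ × ℝ | p.2 = 0} := by
    apply ContinuousOn.congr (f := fun p : ℝ × ℝ => if 1/2 ≤ p.1 then (2*p.1 - 1, (0:ℝ)) else ((0:ℝ), 1 - 2*p.1))
    · exact hbotaux.continuousOn
    · intro p hp; simp only [Set.mem_setOf_eq] at hp
      simp [chid, hp]
  have hleft : ContinuousOn chid {p : ℝ × ℝ | p.1 = 0} := by
    apply ContinuousOn.congr (f := fun p : ℝ × ℝ => (p.2/2, (1:ℝ)))
    · exact (Continuous.continuousOn (by fun_prop))
    · intro p hp; simp only [Set.mem_setOf_eq] at hp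
      unfold chid
      by_cases h1 : p.2 = 0
      · have : ¬ ((1:ℝ)/2 ≤ p.1) := by rw [hp]; norm_num
        simp [h1, hp, this]
      · simp [h1, hp]
  have htop : ContinuousOn chid {p : ℝ × ℝ | p.2 = 1} := by
    apply ContinuousOn.congr (f := fun p : ℝ × ℝ => ((p.1+1)/2, (1:ℝ)))
    · exact (Continuous.continuousOn (by fun_prop))
    · intro p hp; simp only [Set.mem_setOf_eq] at hp
      unfold chid
      have h1 : ¬ (p.2 = 0) := by rw [hp]; norm_num
      simp only [if_neg h1]
      by_cases h2 : p.1 = 0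
      · simp [h2, hp]
      · simp [h2, hp]
  have hright : ContinuousOn chid {p : ℝ × ℝ | p.1 = 1} := by
    apply ContinuousOn.congr (f := fun p : ℝ × ℝ => ((1:ℝ), p.2))
    · exact (Continuous.continuousOn (by fun_prop))
    · intro p hp; simp only [Set.mem_setOf_eq] at hp
      unfold chid
      by_cases h1 : p.2 = 0
      · have : ((1:ℝ)/2 ≤ p.1) := by rw [hp]; norm_num
        simp [h1, hp, this]
        norm_num
      · have h2 : ¬ (p.1 = 0) := by rw [hp]; norm_num
        by_cases h3 : p.2 = 1
        · simp [h1, h2, h3, hp]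
        · simp [h1, h2, h3]
  have hsub : bdS ⊆ ({p : ℝ × ℝ | p.2 = 0} ∪ {p : ℝ × ℝ | p.1 = 0}) ∪ ({p : ℝ × ℝ | p.2 = 1} ∪ {p : ℝ × ℝ | p.1 = 1}) := by
    rintro p ⟨_, h | h | h | h⟩ <;> simp [h]
  have c1 : IsClosed {p : ℝ × ℝ | p.2 = 0} := isClosed_eq (by fun_prop) continuous_const
  have c2 : IsClosed {p : ℝ × ℝ | p.1 = 0} := isClosed_eq (by fun_prop) continuous_const
  have c3 : IsClosed {p : ℝ × ℝ | p.2 = 1} := isClosed_eq (by fun_prop) continuous_const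
  have c4 : IsClosed {p : ℝ × ℝ | p.1 = 1} := isClosed_eq (by fun_prop) continuous_const
  exact (contOn_union_closed (c1.union c2) (c3.union c4)
    (contOn_union_closed c1 c2 hbot hleft) (contOn_union_closed c3 c4 htop hright)).mono hsub

theorem bdS_subset_sqS : bdS ⊆ sqS := fun p hp => hp.1

def rho (p : ℝ × ℝ) : ℝ := 2 * max |p.1 - 1/2| |p.2 - 1/2|

theorem rho_nonneg (p : ℝ × ℝ) : 0 ≤ rho p := by
  have := abs_nonneg (p.1 - 1/2)
  have := le_max_left |p.1 - 1/2| |p.2 - 1/2|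
  unfold rho; linarith

theorem rho_cont : Continuous rho := by
  apply Continuous.mul continuous_const
  exact ((continuous_fst.sub continuous_const).abs.max
    ((continuous_snd.sub continuous_const).abs))

theorem rho_eq_zero_iff (p : ℝ × ℝ) : rho p = 0 ↔ p.1 = 1/2 ∧ p.2 = 1/2 := by
  unfold rho
  constructor
  · intro h
    have h1 : |p.1 - 1/2| ≤ 0 := by
      have := le_max_left |p.1 - 1/2| |p.2 - 1/2|; linarith
    have h2 : |p.2 - 1/2| ≤ 0 := by
      have := le_max_right |p.1 - 1/2| |p.2 - 1/2|; linarith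
    have h1' := abs_nonneg (p.1 - 1/2)
    have h2' := abs_nonneg (p.2 - 1/2)
    have e1 : |p.1 - 1/2| = 0 := le_antisymm h1 h1'
    have e2 : |p.2 - 1/2| = 0 := le_antisymm h2 h2'
    rw [abs_eq_zero] at e1 e2
    constructor <;> linarith
  · rintro ⟨h1, h2⟩
    rw [h1, h2]; simp

theorem abs_le_half {x : ℝ} (hx : x ∈ Icc (0:ℝ) 1) : |x - 1/2| ≤ 1/2 :=
  abs_le.2 ⟨by linarith [hx.1], by linarith [hx.2]⟩

theorem rho_le_one {p : ℝ × ℝ} (hp : p ∈ sqS) : rho p ≤ 1 := by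
  have h1 := abs_le_half hp.1
  have h2 := abs_le_half hp.2
  unfold rho
  have := max_le h1 h2
  linarith

theorem mem_bdS_iff_rho {p : ℝ × ℝ} (hp : p ∈ sqS) : p ∈ bdS ↔ rho p = 1 := by
  constructor
  · rintro ⟨_, h⟩
    unfold rho
    have h1 := abs_le_half hp.1
    have h2 := abs_le_half hp.2
    have e0 : |(0:ℝ) - 1/2| = 1/2 := by rw [abs_of_nonpos (by norm_num)]; norm_num
    have e1 : |(1:ℝ) - 1/2| = 1/2 := by rw [abs_of_nonneg (by norm_num)]; norm_num
    rcases h with h | h | h | h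
    · rw [h, e0, max_eq_left (by linarith)]; norm_num
    · rw [h, e1, max_eq_left (by linarith)]; norm_num
    · rw [h, e0, max_eq_right (by linarith)]; norm_num
    · rw [h, e1, max_eq_right (by linarith)]; norm_num
  · intro h
    refine ⟨hp, ?_⟩
    unfold rho at h
    rcases max_choice |p.1 - 1/2| |p.2 - 1/2| with hm | hm <;> rw [hm] at h
    · rcases abs_eq (by norm_num : (0:ℝ) ≤ 1/2) |>.1 (by linarith : |p.1 - 1/2| = 1/2) with h' | h'
      · right; left; linarith
      · left; linarith
    · rcases abs_eq (by norm_num : (0:ℝ) ≤ 1/2) |>.1 (by linarith : |p.2 - 1/2| = 1/2) with h' | h'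
      · right; right; right; linarith
      · right; right; left; linarith

def ubd (p : ℝ × ℝ) : ℝ × ℝ :=
  if rho p = 0 then ((1:ℝ), (0:ℝ))
  else (1/2 + (p.1 - 1/2)/rho p, 1/2 + (p.2 - 1/2)/rho p)

theorem rho_ubd {p : ℝ × ℝ} (h : rho p ≠ 0) : rho (ubd p) = 1 := by
  have hpos : 0 < rho p := lt_of_le_of_ne (rho_nonneg p) (Ne.symm h)
  set r := rho p with hr
  unfold ubd
  rw [if_neg h]
  show 2 * max |1/2 + (p.1 - 1/2)/r - 1/2| |1/2 + (p.2 - 1/2)/r - 1/2| = 1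
  rw [add_sub_cancel_left, add_sub_cancel_left, abs_div, abs_div,
    abs_of_pos hpos, max_div_div_right (le_of_lt hpos)]
  rw [show (2:ℝ) * ((|p.1 - 1/2| ⊔ |p.2 - 1/2|)/r) = (2 * (|p.1 - 1/2| ⊔ |p.2 - 1/2|))/r by ring]
  show rho p / r = 1
  rw [← hr]
  exact div_self h

theorem ubd_mem {p : ℝ × ℝ} (hp : p ∈ sqS) (h : rho p ≠ 0) : ubd p ∈ bdS := by
  have hpos : 0 < rho p := lt_of_le_of_ne (rho_nonneg p) (Ne.symm h)
  have hsq : ubd p ∈ sqS := by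
    have b1 : |p.1 - 1/2| ≤ rho p / 2 := by
      have := le_max_left |p.1 - 1/2| |p.2 - 1/2|; unfold rho; linarith
    have b2 : |p.2 - 1/2| ≤ rho p / 2 := by
      have := le_max_right |p.1 - 1/2| |p.2 - 1/2|; unfold rho; linarith
    have c1 : |(p.1 - 1/2)/rho p| ≤ 1/2 := by
      rw [abs_div, abs_of_pos hpos, div_le_iff₀ hpos]; linarith
    have c2 : |(p.2 - 1/2)/rho p| ≤ 1/2 := by
      rw [abs_div, abs_of_pos hpos, div_le_iff₀ hpos]; linarith
    rw [abs_le] at c1 c2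
    unfold ubd; rw [if_neg h]
    exact ⟨⟨by simpa using by linarith [c1.1], by simpa using by linarith [c1.2]⟩,
      ⟨by simpa using by linarith [c2.1], by simpa using by linarith [c2.2]⟩⟩
  exact (mem_bdS_iff_rho hsq).2 (rho_ubd h)

theorem ubd_eq_self {p : ℝ × ℝ} (h : rho p = 1) : ubd p = p := by
  unfold ubd
  rw [if_neg (by rw [h]; norm_num)]
  rw [h]
  ext <;> simp

def rad (g : ℝ × ℝ → ℝ × ℝ) (p : ℝ × ℝ) : ℝ × ℝ :=
  (1/2 + rho p * ((g (ubd p)).1 - 1/2), 1/2 + rho p * ((g (ubd p)).2 - 1/2))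

theorem rad_center (g : ℝ × ℝ → ℝ × ℝ) {p : ℝ × ℝ} (h : rho p = 0) :
    rad g p = (1/2, 1/2) := by
  unfold rad; rw [h]; ext <;> simp

theorem rho_rad {g : ℝ × ℝ → ℝ × ℝ} {p : ℝ × ℝ} (hgu : rho (g (ubd p)) = 1) :
    rho (rad g p) = rho p := by
  have hmax : max |(g (ubd p)).1 - 1/2| |(g (ubd p)).2 - 1/2| = 1/2 := by
    unfold rho at hgu; linarith
  have hr0 : 0 ≤ rho p := rho_nonneg p
  set r := rho p with hr
  show 2 * max |1/2 + r * ((g (ubd p)).1 - 1/2) - 1/2| |1/2 + r * ((g (ubd p)).2 - 1/2) - 1/2| = r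
  rw [add_sub_cancel_left, add_sub_cancel_left, abs_mul, abs_mul, abs_of_nonneg hr0,
    ← mul_max_of_nonneg _ _ hr0, hmax]
  ring

theorem rad_mem {g : ℝ × ℝ → ℝ × ℝ} {p : ℝ × ℝ} (hp : p ∈ sqS)
    (hg : MapsTo g bdS bdS) : rad g p ∈ sqS := by
  by_cases h0 : rho p = 0
  · rw [rad_center g h0]; constructor <;> constructor <;> norm_num
  · have hv : g (ubd p) ∈ sqS := bdS_subset_sqS (hg (ubd_mem hp h0))
    have b1 := abs_le_half hv.1
    have b2 := abs_le_half hv.2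
    rw [abs_le] at b1 b2
    have hρ0 := rho_nonneg p
    have hρ1 := rho_le_one hp
    have e1 : rho p * ((g (ubd p)).1 - 1/2) ≤ 1/2 := by nlinarith [b1.2]
    have e1' : -(1/2) ≤ rho p * ((g (ubd p)).1 - 1/2) := by nlinarith [b1.1]
    have e2 : rho p * ((g (ubd p)).2 - 1/2) ≤ 1/2 := by nlinarith [b2.2]
    have e2' : -(1/2) ≤ rho p * ((g (ubd p)).2 - 1/2) := by nlinarith [b2.1]
    unfold rad
    exact ⟨⟨by simpa using by linarith, by simpa using by linarith⟩,
      ⟨by simpa using by linarith, by simpa using by linarith⟩⟩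

theorem ubd_rad {g : ℝ × ℝ → ℝ × ℝ} {p : ℝ × ℝ} (h : rho p ≠ 0)
    (hgu : rho (g (ubd p)) = 1) : ubd (rad g p) = g (ubd p) := by
  have hρ : rho (rad g p) = rho p := rho_rad hgu
  unfold ubd
  rw [if_neg (by rw [hρ]; exact h)]
  rw [hρ]
  rw [Prod.ext_iff]
  constructor
  · show 1/2 + ((rad g p).1 - 1/2)/rho p = (g (ubd p)).1
    show 1/2 + ((1/2 + rho p * ((g (ubd p)).1 - 1/2)) - 1/2)/rho p = (g (ubd p)).1
    field_simp
    ring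
  · show 1/2 + ((rad g p).2 - 1/2)/rho p = (g (ubd p)).2
    show 1/2 + ((1/2 + rho p * ((g (ubd p)).2 - 1/2)) - 1/2)/rho p = (g (ubd p)).2
    field_simp
    ring

theorem rad_rad {g g' : ℝ × ℝ → ℝ × ℝ} {p : ℝ × ℝ} (hp : p ∈ sqS)
    (hg : MapsTo g bdS bdS) (hgg' : ∀ v ∈ bdS, g' (g v) = v) :
    rad g' (rad g p) = p := by
  by_cases h0 : rho p = 0
  · rw [rad_center g h0]
    have hc : rho ((1/2 : ℝ), (1/2 : ℝ)) = 0 := by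
      rw [rho_eq_zero_iff]; constructor <;> rfl
    rw [rad_center g' hc]
    obtain ⟨h1, h2⟩ := (rho_eq_zero_iff p).1 h0
    rw [Prod.ext_iff]
    exact ⟨by simp [h1], by simp [h2]⟩
  · have hu := ubd_mem hp h0
    have hv := hg hu
    have hgu : rho (g (ubd p)) = 1 := (mem_bdS_iff_rho (bdS_subset_sqS hv)).1 hv
    have hρ : rho (rad g p) = rho p := rho_rad hgu
    have hub : ubd (rad g p) = g (ubd p) := ubd_rad h0 hgu
    rw [show rad g' (rad g p) = (1/2 + rho (rad g p) * ((g' (ubd (rad g p))).1 - 1/2),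
        1/2 + rho (rad g p) * ((g' (ubd (rad g p))).2 - 1/2)) from rfl,
      hρ, hub, hgg' _ hu]
    unfold ubd
    rw [if_neg h0]
    rw [Prod.ext_iff]
    constructor
    · show 1/2 + rho p * ((1/2 + (p.1 - 1/2)/rho p) - 1/2) = p.1
      field_simp
      ring
    · show 1/2 + rho p * ((1/2 + (p.2 - 1/2)/rho p) - 1/2) = p.2
      field_simp
      ring



theorem rad_contOn {g : ℝ × ℝ → ℝ × ℝ} (hgc : ContinuousOn g bdS)
    (hg : MapsTo g bdS bdS) : ContinuousOn (rad g) sqS := by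
  intro p hp
  by_cases h0 : rho p = 0
  · obtain ⟨h1, h2⟩ := (rho_eq_zero_iff p).1 h0
    have hpc : p = ((1/2 : ℝ), (1/2 : ℝ)) := Prod.ext_iff.2 ⟨h1, h2⟩
    subst hpc
    rw [Metric.continuousWithinAt_iff]
    intro ε hε
    refine ⟨ε, hε, ?_⟩
    intro q hq hdq
    rw [rad_center g h0]
    have key : dist (rad g q) ((1/2 : ℝ), (1/2 : ℝ)) ≤ dist q ((1/2 : ℝ), (1/2 : ℝ)) := by
      by_cases hq0 : rho q = 0
      · rw [rad_center g hq0]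
        simp [dist_nonneg]
      · have hv : g (ubd q) ∈ sqS := bdS_subset_sqS (hg (ubd_mem hq hq0))
        have b1 := abs_le_half hv.1
        have b2 := abs_le_half hv.2
        have hρq : rho q = 2 * dist q ((1/2 : ℝ), (1/2 : ℝ)) := by
          rw [Prod.dist_eq, Real.dist_eq, Real.dist_eq]
          rfl
        have e1 : (rad g q).1 = 1/2 + rho q * ((g (ubd q)).1 - 1/2) := rfl
        have e2 : (rad g q).2 = 1/2 + rho q * ((g (ubd q)).2 - 1/2) := rfl
        rw [Prod.dist_eq, Real.dist_eq, Real.dist_eq]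
        have hρ0 := rho_nonneg q
        apply max_le
        · rw [e1]
          have : |1/2 + rho q * ((g (ubd q)).1 - 1/2) - 1/2| = rho q * |(g (ubd q)).1 - 1/2| := by
            rw [add_sub_cancel_left, abs_mul, abs_of_nonneg hρ0]
          rw [this]
          calc rho q * |(g (ubd q)).1 - 1/2| ≤ rho q * (1/2) := by nlinarith
          _ ≤ dist q ((1/2 : ℝ), (1/2 : ℝ)) := by rw [hρq] at *; linarith [dist_nonneg (x := q) (y := ((1/2 : ℝ), (1/2 : ℝ)))]
        · rw [e2]
          have : |1/2 + rho q * ((g (ubd q)).2 - 1/2) - 1/2| = rho q * |(g (ubd q)).2 - 1/2| := by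
            rw [add_sub_cancel_left, abs_mul, abs_of_nonneg hρ0]
          rw [this]
          calc rho q * |(g (ubd q)).2 - 1/2| ≤ rho q * (1/2) := by nlinarith
          _ ≤ dist q ((1/2 : ℝ), (1/2 : ℝ)) := by rw [hρq] at *; linarith [dist_nonneg (x := q) (y := ((1/2 : ℝ), (1/2 : ℝ)))]
    exact lt_of_le_of_lt key hdq
  · have hne : {r : ℝ × ℝ | rho r ≠ 0} ∈ nhds p :=
      (isOpen_compl_singleton.preimage rho_cont).mem_nhds h0
    rw [← continuousWithinAt_inter hne]
    have hformula : ContinuousWithinAt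
        (fun r : ℝ × ℝ => ((1:ℝ)/2 + (r.1 - 1/2)/rho r, (1:ℝ)/2 + (r.2 - 1/2)/rho r))
        (sqS ∩ {r | rho r ≠ 0}) p := by
      apply ContinuousAt.continuousWithinAt
      apply ContinuousAt.prodMk
      · exact (continuousAt_const.add (((continuous_fst.sub continuous_const).continuousAt).div
          rho_cont.continuousAt h0))
      · exact (continuousAt_const.add (((continuous_snd.sub continuous_const).continuousAt).div
          rho_cont.continuousAt h0))
    have hu_c : ContinuousWithinAt ubd (sqS ∩ {r | rho r ≠ 0}) p := by
      apply hformula.congr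
      · intro r hr
        unfold ubd
        rw [if_neg hr.2]
      · unfold ubd
        rw [if_neg h0]
    have hmaps : MapsTo ubd (sqS ∩ {r | rho r ≠ 0}) bdS := fun r hr => ubd_mem hr.1 hr.2
    have hgu : ContinuousWithinAt (fun r => g (ubd r)) (sqS ∩ {r | rho r ≠ 0}) p :=
      ContinuousWithinAt.comp (hgc (ubd p) (ubd_mem hp h0)) hu_c hmaps
    apply ContinuousWithinAt.prodMk
    · exact continuousWithinAt_const.add
        ((rho_cont.continuousAt.continuousWithinAt).mul (hgu.fst.sub continuousWithinAt_const))
    · exact continuousWithinAt_const.add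
        ((rho_cont.continuousAt.continuousWithinAt).mul (hgu.snd.sub continuousWithinAt_const))

def psr : ℝ × ℝ → ℝ × ℝ := rad psid
def chr : ℝ × ℝ → ℝ × ℝ := rad chid

theorem psid_mapsTo : MapsTo psid bdS bdS := fun p hp => psid_mem p hp
theorem chid_mapsTo : MapsTo chid bdS bdS := fun p hp => chid_mem p hp

theorem psr_mem {p : ℝ × ℝ} (hp : p ∈ sqS) : psr p ∈ sqS := rad_mem hp psid_mapsTo
theorem chr_mem {p : ℝ × ℝ} (hp : p ∈ sqS) : chr p ∈ sqS := rad_mem hp chid_mapsTo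

theorem psr_contOn : ContinuousOn psr sqS := rad_contOn continuousOn_psid psid_mapsTo
theorem chr_contOn : ContinuousOn chr sqS := rad_contOn continuousOn_chid chid_mapsTo

theorem chr_psr {p : ℝ × ℝ} (hp : p ∈ sqS) : chr (psr p) = p :=
  rad_rad hp psid_mapsTo chid_psid

theorem psr_chr {p : ℝ × ℝ} (hp : p ∈ sqS) : psr (chr p) = p :=
  rad_rad hp chid_mapsTo psid_chid

theorem psr_snd_eq_zero {p : ℝ × ℝ} (hp : p ∈ sqS) :
    (psr p).2 = 0 ↔ p.1 = 0 ∨ p.2 = 0 := by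
  by_cases h0 : rho p = 0
  · obtain ⟨h1, h2⟩ := (rho_eq_zero_iff p).1 h0
    have hval : (psr p).2 = 1/2 := by
      show 1/2 + rho p * ((psid (ubd p)).2 - 1/2) = 1/2
      rw [h0]; ring
    rw [hval]
    constructor
    · intro h; norm_num at h
    · rintro (h | h)
      · rw [h] at h1; norm_num at h1
      · rw [h] at h2; norm_num at h2
  · have hpos : 0 < rho p := lt_of_le_of_ne (rho_nonneg p) (Ne.symm h0)
    have hρ1 := rho_le_one hp
    have hu := ubd_mem hp h0
    have hvbd := psid_mem _ hu
    have hv01 : (psid (ubd p)).2 ∈ Icc (0:ℝ) 1 := (bdS_subset_sqS hvbd).2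
    have heq : (psr p).2 = 1/2 + rho p * ((psid (ubd p)).2 - 1/2) := rfl
    constructor
    · intro h
      rw [heq] at h
      have hv0 : 0 ≤ (psid (ubd p)).2 := hv01.1
      have expand : rho p * (psid (ubd p)).2 - rho p / 2 = rho p * ((psid (ubd p)).2 - 1/2) := by
        ring
      have hrv : rho p * (psid (ubd p)).2 ≤ 0 := by linarith
      have hvle : (psid (ubd p)).2 ≤ 0 := by
        by_contra hvp
        push_neg at hvp
        have := mul_pos hpos hvp
        linarith
      have hveq : (psid (ubd p)).2 = 0 := le_antisymm hvle hv0
      have hρeq : rho p = 1 := by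
        rw [hveq] at h; linarith
      have hbd : p ∈ bdS := (mem_bdS_iff_rho hp).2 hρeq
      have hup : ubd p = p := ubd_eq_self hρeq
      rw [hup] at hveq
      exact (psid_snd_eq_zero p hbd).1 hveq
    · intro h
      have hbd : p ∈ bdS := ⟨hp, by tauto⟩
      have hρeq : rho p = 1 := (mem_bdS_iff_rho hp).1 hbd
      have hup : ubd p = p := ubd_eq_self hρeq
      rw [heq, hup, hρeq, (psid_snd_eq_zero p hbd).2 h]
      ring

open unitInterval in
def ptR (y : I × I) : ℝ × ℝ := ((y.1 : ℝ), (y.2 : ℝ))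

open unitInterval

theorem ptR_mem (y : I × I) : ptR y ∈ sqS := ⟨y.1.2, y.2.2⟩

theorem ptR_cont : Continuous ptR :=
  (continuous_subtype_val.comp continuous_fst).prodMk
    (continuous_subtype_val.comp continuous_snd)

def psiI (y : I × I) : I × I :=
  (⟨(psr (ptR y)).1, (psr_mem (ptR_mem y)).1⟩, ⟨(psr (ptR y)).2, (psr_mem (ptR_mem y)).2⟩)

def chiI (y : I × I) : I × I :=
  (⟨(chr (ptR y)).1, (chr_mem (ptR_mem y)).1⟩, ⟨(chr (ptR y)).2, (chr_mem (ptR_mem y)).2⟩)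

theorem psiI_cont : Continuous psiI := by
  have h : Continuous fun y => psr (ptR y) :=
    psr_contOn.comp_continuous ptR_cont (fun y => ptR_mem y)
  exact (h.fst.subtype_mk _).prodMk (h.snd.subtype_mk _)

theorem chiI_cont : Continuous chiI := by
  have h : Continuous fun y => chr (ptR y) :=
    chr_contOn.comp_continuous ptR_cont (fun y => ptR_mem y)
  exact (h.fst.subtype_mk _).prodMk (h.snd.subtype_mk _)

theorem ptR_psiI (y : I × I) : ptR (psiI y) = psr (ptR y) := rfl

theorem ptR_chiI (y : I × I) : ptR (chiI y) = chr (ptR y) := rfl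

theorem chiI_psiI (y : I × I) : chiI (psiI y) = y := by
  have h := chr_psr (ptR_mem y)
  rw [Prod.ext_iff]
  constructor
  · apply Subtype.ext
    show (chr (ptR (psiI y))).1 = (y.1 : ℝ)
    rw [ptR_psiI, h]
    rfl
  · apply Subtype.ext
    show (chr (ptR (psiI y))).2 = (y.2 : ℝ)
    rw [ptR_psiI, h]
    rfl

theorem psiI_chiI (y : I × I) : psiI (chiI y) = y := by
  have h := psr_chr (ptR_mem y)
  rw [Prod.ext_iff]
  constructor
  · apply Subtype.ext
    show (psr (ptR (chiI y))).1 = (y.1 : ℝ)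
    rw [ptR_chiI, h]
    rfl
  · apply Subtype.ext
    show (psr (ptR (chiI y))).2 = (y.2 : ℝ)
    rw [ptR_chiI, h]
    rfl

theorem psiI_snd_eq_zero (y : I × I) : (psiI y).2 = 0 ↔ y.1 = 0 ∨ y.2 = 0 := by
  have h := psr_snd_eq_zero (ptR_mem y)
  constructor
  · intro hz
    have : (psr (ptR y)).2 = 0 := by
      have := congrArg Subtype.val hz
      exact this
    rcases h.1 this with h' | h'
    · exact Or.inl (Subtype.ext h')
    · exact Or.inr (Subtype.ext h')
  · intro hz
    apply Subtype.ext
    show (psr (ptR y)).2 = 0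
    apply h.2
    rcases hz with h' | h'
    · exact Or.inl (congrArg Subtype.val h')
    · exact Or.inr (congrArg Subtype.val h')

end SqHomeo


section LocFibPart

open unitInterval SqHomeo

variable {n : ℕ}

def TS (n : ℕ) (S : Finset (Fin n)) : Set ((Fin n → I) × I) :=
  {z | z.2 = 0 ∨ ∃ i ∈ S, z.1 i = 0}

def Phi (i : Fin n) (z : (Fin n → I) × I) : (Fin n → I) × I :=
  ((fun j => if j = i then (psiI (z.1 i, z.2)).1 else z.1 j), (psiI (z.1 i, z.2)).2)

def PhiInv (i : Fin n) (z : (Fin n → I) × I) : (Fin n → I) × I :=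
  ((fun j => if j = i then (chiI (z.1 i, z.2)).1 else z.1 j), (chiI (z.1 i, z.2)).2)

theorem Phi_cont (i : Fin n) : Continuous (Phi i) := by
  have hy : Continuous fun z : (Fin n → I) × I => psiI (z.1 i, z.2) :=
    psiI_cont.comp (((continuous_apply i).comp continuous_fst).prodMk continuous_snd)
  refine Continuous.prodMk (continuous_pi fun j => ?_) hy.snd
  by_cases h : j = i
  · simp only [if_pos h]
    exact hy.fst
  · simp only [if_neg h]
    exact (continuous_apply j).comp continuous_fst

theorem PhiInv_cont (i : Fin n) : Continuous (PhiInv i) := by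
  have hy : Continuous fun z : (Fin n → I) × I => chiI (z.1 i, z.2) :=
    chiI_cont.comp (((continuous_apply i).comp continuous_fst).prodMk continuous_snd)
  refine Continuous.prodMk (continuous_pi fun j => ?_) hy.snd
  by_cases h : j = i
  · simp only [if_pos h]
    exact hy.fst
  · simp only [if_neg h]
    exact (continuous_apply j).comp continuous_fst

theorem PhiInv_Phi (i : Fin n) (z : (Fin n → I) × I) : PhiInv i (Phi i z) = z := by
  have key : ((Phi i z).1 i, (Phi i z).2) = psiI (z.1 i, z.2) := by
    rw [Prod.ext_iff]
    constructor
    · show (if i = i then (psiI (z.1 i, z.2)).1 else z.1 i) = _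
      rw [if_pos rfl]
    · rfl
  unfold PhiInv
  rw [key, chiI_psiI]
  rw [Prod.ext_iff]
  constructor
  · funext j
    by_cases h : j = i
    · subst h
      simp
    · simp only [if_neg h]
      show (Phi i z).1 j = z.1 j
      unfold Phi
      simp only [if_neg h]
  · rfl

theorem Phi_PhiInv (i : Fin n) (z : (Fin n → I) × I) : Phi i (PhiInv i z) = z := by
  have key : ((PhiInv i z).1 i, (PhiInv i z).2) = chiI (z.1 i, z.2) := by
    rw [Prod.ext_iff]
    constructor
    · show (if i = i then (chiI (z.1 i, z.2)).1 else z.1 i) = _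
      rw [if_pos rfl]
    · rfl
  unfold Phi
  rw [key, psiI_chiI]
  rw [Prod.ext_iff]
  constructor
  · funext j
    by_cases h : j = i
    · subst h
      simp
    · simp only [if_neg h]
      show (PhiInv i z).1 j = z.1 j
      unfold PhiInv
      simp only [if_neg h]
  · rfl

theorem Phi_mem_TS {i : Fin n} {S : Finset (Fin n)} (hi : i ∉ S) (z : (Fin n → I) × I) :
    z ∈ TS n (insert i S) ↔ Phi i z ∈ TS n S := by
  unfold TS Phi
  simp only [Set.mem_setOf_eq, Finset.mem_insert]
  constructor
  · rintro (h | ⟨j, hj, hz⟩)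
    · left
      rw [psiI_snd_eq_zero]
      right; exact h
    · rcases hj with rfl | hjS
      · left
        rw [psiI_snd_eq_zero]
        left; exact hz
      · right
        refine ⟨j, hjS, ?_⟩
        rw [if_neg (by rintro rfl; exact hi hjS)]
        exact hz
  · rintro (h | ⟨j, hjS, hz⟩)
    · rw [psiI_snd_eq_zero] at h
      rcases h with h | h
      · right; exact ⟨i, Or.inl rfl, h⟩
      · left; exact h
    · right
      refine ⟨j, Or.inr hjS, ?_⟩
      rwa [if_neg (by rintro rfl; exact hi hjS)] at hz

theorem exists_retr (n : ℕ) (S : Finset (Fin n)) :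
    ∃ r : (Fin n → I) × I → (Fin n → I) × I,
      Continuous r ∧ (∀ z, r z ∈ TS n S) ∧ (∀ z ∈ TS n S, r z = z) := by
  classical
  induction S using Finset.induction_on with
  | empty =>
    refine ⟨fun z => (z.1, 0), continuous_fst.prodMk continuous_const, fun z => Or.inl rfl, ?_⟩
    rintro z (h | ⟨j, hj, _⟩)
    · rw [Prod.ext_iff]
      exact ⟨rfl, h.symm⟩
    · exact absurd hj (Finset.notMem_empty j)
  | @insert i S hiS ih =>
    obtain ⟨r, hrc, hrm, hrid⟩ := ih
    refine ⟨fun z => PhiInv i (r (Phi i z)),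
      (PhiInv_cont i).comp (hrc.comp (Phi_cont i)), ?_, ?_⟩
    · intro z
      rw [Phi_mem_TS hiS, Phi_PhiInv]
      exact hrm _
    · intro z hz
      show PhiInv i (r (Phi i z)) = z
      rw [hrid _ ((Phi_mem_TS hiS z).1 hz), PhiInv_Phi]

def RelHLP {E B : Type*} [TopologicalSpace E] [TopologicalSpace B] (q : E → B) (n : ℕ)
    (S : Finset (Fin n)) : Prop :=
  ∀ K : (Fin n → I) × I → B, Continuous K → ∀ F₀ : (Fin n → I) × I → E, Continuous F₀ →
    (∀ z ∈ TS n S, q (F₀ z) = K z) →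
    ∃ L : (Fin n → I) × I → E, Continuous L ∧ (∀ z, q (L z) = K z) ∧
      ∀ z ∈ TS n S, L z = F₀ z

theorem relHLP_of_serre {E B : Type*} [TopologicalSpace E] [TopologicalSpace B] {q : E → B}
    (hq : IsSerreFibration q) (n : ℕ) (S : Finset (Fin n)) : RelHLP q n S := by
  classical
  induction S using Finset.induction_on with
  | empty =>
    intro K hK F₀ hF₀ hcomp
    obtain ⟨L, hLc, hL0, hLl⟩ := hq n (fun x => F₀ (x, 0)) K
      (hF₀.comp (continuous_id.prodMk continuous_const)) hK
      (fun c => (hcomp (c, 0) (Or.inl rfl)).symm)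
    refine ⟨L, hLc, hLl, ?_⟩
    rintro z (h | ⟨j, hj, _⟩)
    · have hz : z = (z.1, 0) := by
        rw [Prod.ext_iff]
        exact ⟨rfl, h⟩
      rw [hz]
      exact hL0 z.1
    · exact absurd hj (Finset.notMem_empty j)
  | @insert i S hiS ih =>
    intro K hK F₀ hF₀ hcomp
    obtain ⟨L', hL'c, hL'l, hL'T⟩ := ih (K ∘ PhiInv i) (hK.comp (PhiInv_cont i))
      (F₀ ∘ PhiInv i) (hF₀.comp (PhiInv_cont i))
      (by
        intro z' hz'
        have : PhiInv i z' ∈ TS n (insert i S) := by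
          rw [Phi_mem_TS hiS, Phi_PhiInv]
          exact hz'
        exact hcomp _ this)
    refine ⟨L' ∘ Phi i, hL'c.comp (Phi_cont i), ?_, ?_⟩
    · intro z
      have := hL'l (Phi i z)
      simpa [PhiInv_Phi] using this
    · intro z hz
      have hΦz : Phi i z ∈ TS n S := (Phi_mem_TS hiS z).1 hz
      have := hL'T (Phi i z) hΦz
      simpa [PhiInv_Phi] using this

end LocFibPart
section CellPart

open unitInterval Set

variable {n : ℕ}

theorem coe_projIcc_of_mem {x : ℝ} (hx : x ∈ Icc (0:ℝ) 1) :
    ((Set.projIcc 0 1 zero_le_one x : I) : ℝ) = x := by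
  rw [Set.projIcc_of_mem _ hx]

def cellZ (N : ℕ) (k : Fin n → ℕ) (l : ℕ) : Set ((Fin n → I) × I) :=
  {z | (∀ i, (k i : ℝ)/N ≤ (z.1 i : ℝ) ∧ (z.1 i : ℝ) ≤ ((k i : ℝ)+1)/N) ∧
    ((l : ℝ)/N ≤ (z.2 : ℝ) ∧ (z.2 : ℝ) ≤ ((l : ℝ)+1)/N)}

def TcellZ (N : ℕ) (k : Fin n → ℕ) (l : ℕ) : Set ((Fin n → I) × I) :=
  {z | z ∈ cellZ N k l ∧
    ((z.2 : ℝ) = (l : ℝ)/N ∨ ∃ i, k i ≠ 0 ∧ (z.1 i : ℝ) = (k i : ℝ)/N)}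

theorem coord_cont (i : Fin n) : Continuous fun z : (Fin n → I) × I => ((z.1 i : ℝ)) :=
  continuous_subtype_val.comp ((continuous_apply i).comp continuous_fst)

theorem coord2_cont : Continuous fun z : (Fin n → I) × I => ((z.2 : ℝ)) :=
  continuous_subtype_val.comp continuous_snd

theorem isClosed_cellZ (N : ℕ) (k : Fin n → ℕ) (l : ℕ) : IsClosed (cellZ N k l) := by
  have heq : cellZ N k l =
      (⋂ i, ({z : (Fin n → I) × I | (k i : ℝ)/N ≤ (z.1 i : ℝ)} ∩
        {z : (Fin n → I) × I | (z.1 i : ℝ) ≤ ((k i : ℝ)+1)/N})) ∩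
      ({z : (Fin n → I) × I | (l : ℝ)/N ≤ (z.2 : ℝ)} ∩
        {z : (Fin n → I) × I | (z.2 : ℝ) ≤ ((l : ℝ)+1)/N}) := by
    ext z
    simp only [cellZ, Set.mem_setOf_eq, Set.mem_inter_iff, Set.mem_iInter]
  rw [heq]
  exact (isClosed_iInter fun i =>
    (isClosed_le continuous_const (coord_cont i)).inter
      (isClosed_le (coord_cont i) continuous_const)).inter
    ((isClosed_le continuous_const coord2_cont).inter
      (isClosed_le coord2_cont continuous_const))

def emap (N : ℕ) (k : Fin n → ℕ) (l : ℕ) (w : (Fin n → I) × I) : (Fin n → I) × I :=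
  ((fun i => Set.projIcc 0 1 zero_le_one (((k i : ℝ) + (w.1 i : ℝ))/N)),
   Set.projIcc 0 1 zero_le_one (((l : ℝ) + (w.2 : ℝ))/N))

def dmap (N : ℕ) (k : Fin n → ℕ) (l : ℕ) (z : (Fin n → I) × I) : (Fin n → I) × I :=
  ((fun i => Set.projIcc 0 1 zero_le_one ((z.1 i : ℝ) * N - k i)),
   Set.projIcc 0 1 zero_le_one ((z.2 : ℝ) * N - l))

theorem emap_cont (N : ℕ) (k : Fin n → ℕ) (l : ℕ) : Continuous (emap N k l) := by
  refine Continuous.prodMk (continuous_pi fun i => ?_) ?_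
  · exact continuous_projIcc.comp ((continuous_const.add (coord_cont i)).div_const _)
  · exact continuous_projIcc.comp ((continuous_const.add coord2_cont).div_const _)

theorem dmap_cont (N : ℕ) (k : Fin n → ℕ) (l : ℕ) : Continuous (dmap N k l) := by
  refine Continuous.prodMk (continuous_pi fun i => ?_) ?_
  · exact continuous_projIcc.comp (((coord_cont i).mul continuous_const).sub continuous_const)
  · exact continuous_projIcc.comp ((coord2_cont.mul continuous_const).sub continuous_const)

variable {N l : ℕ} {k : Fin n → ℕ}

theorem emap_coord_mem (hN : 0 < N) (hkN : ∀ i, k i + 1 ≤ N) (w : (Fin n → I) × I)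
    (i : Fin n) : ((k i : ℝ) + (w.1 i : ℝ))/N ∈ Icc (0:ℝ) 1 := by
  have hNR : (0:ℝ) < N := by exact_mod_cast hN
  have hu := (w.1 i).2
  have hb : ((k i : ℝ) + 1) ≤ N := by exact_mod_cast hkN i
  constructor
  · apply div_nonneg _ (le_of_lt hNR)
    have : (0:ℝ) ≤ (k i : ℝ) := Nat.cast_nonneg _
    linarith [hu.1]
  · rw [div_le_one hNR]
    linarith [hu.2]

theorem emap_time_mem (hN : 0 < N) (hlN : l + 1 ≤ N) (w : (Fin n → I) × I) :
    ((l : ℝ) + (w.2 : ℝ))/N ∈ Icc (0:ℝ) 1 := by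
  have hNR : (0:ℝ) < N := by exact_mod_cast hN
  have hu := w.2.2
  have hb : ((l : ℝ) + 1) ≤ N := by exact_mod_cast hlN
  constructor
  · apply div_nonneg _ (le_of_lt hNR)
    have : (0:ℝ) ≤ (l : ℝ) := Nat.cast_nonneg _
    linarith [hu.1]
  · rw [div_le_one hNR]
    linarith [hu.2]

theorem emap_coord (hN : 0 < N) (hkN : ∀ i, k i + 1 ≤ N) (w : (Fin n → I) × I) (i : Fin n) :
    (((emap N k l w).1 i : ℝ)) = ((k i : ℝ) + (w.1 i : ℝ))/N :=
  coe_projIcc_of_mem (emap_coord_mem hN hkN w i)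

theorem emap_time (hN : 0 < N) (hlN : l + 1 ≤ N) (w : (Fin n → I) × I) :
    (((emap N k l w).2 : ℝ)) = ((l : ℝ) + (w.2 : ℝ))/N :=
  coe_projIcc_of_mem (emap_time_mem hN hlN w)

theorem emap_mem (hN : 0 < N) (hkN : ∀ i, k i + 1 ≤ N) (hlN : l + 1 ≤ N)
    (w : (Fin n → I) × I) : emap N k l w ∈ cellZ N k l := by
  have hNR : (0:ℝ) < N := by exact_mod_cast hN
  constructor
  · intro i
    rw [emap_coord hN hkN w i]
    have hu := (w.1 i).2
    constructor
    · rw [div_le_div_iff_of_pos_right hNR]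
      linarith [hu.1]
    · rw [div_le_div_iff_of_pos_right hNR]
      linarith [hu.2]
  · rw [emap_time hN hlN w]
    have hu := w.2.2
    constructor
    · rw [div_le_div_iff_of_pos_right hNR]
      linarith [hu.1]
    · rw [div_le_div_iff_of_pos_right hNR]
      linarith [hu.2]

theorem dmap_emap (hN : 0 < N) (hkN : ∀ i, k i + 1 ≤ N) (hlN : l + 1 ≤ N)
    (w : (Fin n → I) × I) : dmap N k l (emap N k l w) = w := by
  have hNR : (0:ℝ) < N := by exact_mod_cast hN
  rw [Prod.ext_iff]
  constructor
  · funext i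
    apply Subtype.ext
    show ((Set.projIcc 0 1 zero_le_one (((emap N k l w).1 i : ℝ) * N - k i) : I) : ℝ) = _
    have harg : ((emap N k l w).1 i : ℝ) * N - k i = (w.1 i : ℝ) := by
      rw [emap_coord hN hkN w i]
      field_simp; ring
    rw [harg, coe_projIcc_of_mem (w.1 i).2]
  · apply Subtype.ext
    show ((Set.projIcc 0 1 zero_le_one (((emap N k l w).2 : ℝ) * N - l) : I) : ℝ) = _
    have harg : ((emap N k l w).2 : ℝ) * N - l = (w.2 : ℝ) := by
      rw [emap_time hN hlN w]
      field_simp; ring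
    rw [harg, coe_projIcc_of_mem w.2.2]

theorem emap_dmap (hN : 0 < N) {z : (Fin n → I) × I} (hz : z ∈ cellZ N k l) :
    emap N k l (dmap N k l z) = z := by
  have hNR : (0:ℝ) < N := by exact_mod_cast hN
  obtain ⟨hzc, hzt⟩ := hz
  rw [Prod.ext_iff]
  constructor
  · funext i
    apply Subtype.ext
    have hmem : (z.1 i : ℝ) * N - k i ∈ Icc (0:ℝ) 1 := by
      obtain ⟨hlo, hhi⟩ := hzc i
      rw [div_le_iff₀ hNR] at hlo
      rw [le_div_iff₀ hNR] at hhi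
      constructor <;> [linarith; linarith]
    have hd : (((dmap N k l z).1 i : ℝ)) = (z.1 i : ℝ) * N - k i := coe_projIcc_of_mem hmem
    have harg : ((k i : ℝ) + (((dmap N k l z).1 i : ℝ)))/N = (z.1 i : ℝ) := by
      rw [hd]; field_simp; ring
    have hm2 : ((k i : ℝ) + (((dmap N k l z).1 i : ℝ)))/N ∈ Icc (0:ℝ) 1 := by
      rw [harg]; exact (z.1 i).2
    show ((Set.projIcc 0 1 zero_le_one (((k i : ℝ) + (((dmap N k l z).1 i : ℝ)))/N) : I) : ℝ)
      = (z.1 i : ℝ)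
    rw [coe_projIcc_of_mem hm2, harg]
  · apply Subtype.ext
    have hmem : (z.2 : ℝ) * N - l ∈ Icc (0:ℝ) 1 := by
      obtain ⟨hlo, hhi⟩ := hzt
      rw [div_le_iff₀ hNR] at hlo
      rw [le_div_iff₀ hNR] at hhi
      constructor <;> [linarith; linarith]
    have hd : (((dmap N k l z).2 : ℝ)) = (z.2 : ℝ) * N - l := coe_projIcc_of_mem hmem
    have harg : ((l : ℝ) + (((dmap N k l z).2 : ℝ)))/N = (z.2 : ℝ) := by
      rw [hd]; field_simp; ring
    have hm2 : ((l : ℝ) + (((dmap N k l z).2 : ℝ)))/N ∈ Icc (0:ℝ) 1 := by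
      rw [harg]; exact z.2.2
    show ((Set.projIcc 0 1 zero_le_one (((l : ℝ) + (((dmap N k l z).2 : ℝ)))/N) : I) : ℝ)
      = (z.2 : ℝ)
    rw [coe_projIcc_of_mem hm2, harg]

theorem coe_I_zero : ((0 : I) : ℝ) = 0 := rfl

theorem dmap_mem_TS (hN : 0 < N) {z : (Fin n → I) × I} (hz : z ∈ TcellZ N k l) :
    dmap N k l z ∈ TS n (Finset.univ.filter fun i => k i ≠ 0) := by
  have hNR : (0:ℝ) < N := by exact_mod_cast hN
  obtain ⟨hzc, hface⟩ := hz
  rcases hface with hb | ⟨i, hki, hzi⟩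
  · left
    apply Subtype.ext
    have harg : (z.2 : ℝ) * N - l = 0 := by
      rw [hb]; field_simp; ring
    show ((Set.projIcc 0 1 zero_le_one ((z.2 : ℝ) * N - l) : I) : ℝ) = ((0 : I) : ℝ)
    rw [harg, coe_I_zero, coe_projIcc_of_mem (by constructor <;> norm_num)]
  · right
    refine ⟨i, Finset.mem_filter.2 ⟨Finset.mem_univ i, hki⟩, ?_⟩
    apply Subtype.ext
    have harg : (z.1 i : ℝ) * N - k i = 0 := by
      rw [hzi]; field_simp; ring
    show ((Set.projIcc 0 1 zero_le_one ((z.1 i : ℝ) * N - k i) : I) : ℝ) = ((0 : I) : ℝ)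
    rw [harg, coe_I_zero, coe_projIcc_of_mem (by constructor <;> norm_num)]

theorem emap_mem_Tcell (hN : 0 < N) (hkN : ∀ i, k i + 1 ≤ N) (hlN : l + 1 ≤ N)
    {w : (Fin n → I) × I} (hw : w ∈ TS n (Finset.univ.filter fun i => k i ≠ 0)) :
    emap N k l w ∈ TcellZ N k l := by
  refine ⟨emap_mem hN hkN hlN w, ?_⟩
  rcases hw with hb | ⟨i, hi, hwi⟩
  · left
    rw [emap_time hN hlN w, hb, coe_I_zero, add_zero]
  · right
    refine ⟨i, (Finset.mem_filter.1 hi).2, ?_⟩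
    rw [emap_coord hN hkN w i, hwi, coe_I_zero, add_zero]

theorem cell_inter_face (hN : 0 < N) {k' : Fin n → ℕ}
    {z : (Fin n → I) × I} (hz : z ∈ cellZ N k l) (hz' : z ∈ cellZ N k' l) {i : Fin n}
    (hlt : k' i < k i) : k i ≠ 0 ∧ (z.1 i : ℝ) = (k i : ℝ)/N := by
  have hNR : (0:ℝ) < N := by exact_mod_cast hN
  have h1 : (k i : ℝ)/N ≤ (z.1 i : ℝ) := (hz.1 i).1
  have h2 : (z.1 i : ℝ) ≤ ((k' i : ℝ)+1)/N := (hz'.1 i).2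
  have hle : ((k' i : ℝ)+1) ≤ (k i : ℝ) := by
    have : k' i + 1 ≤ k i := hlt
    exact_mod_cast this
  have h3 : (z.1 i : ℝ) ≤ (k i : ℝ)/N := le_trans h2 ((div_le_div_iff_of_pos_right hNR).2 hle)
  exact ⟨by omega, le_antisymm h3 h1⟩

end CellPart
section CellLift

open unitInterval Set

variable {n : ℕ}

theorem cell_lift {E B : Type*} [TopologicalSpace E] [TopologicalSpace B] {q : E → B}
    {W : Set B}
    (hW : ∀ S : Finset (Fin n), RelHLP (fun e : q ⁻¹' W => (⟨q e.1, e.2⟩ : W)) n S)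
    {K : (Fin n → I) × I → B} (hK : Continuous K)
    {G₀ : (Fin n → I) × I → E} {Dset : Set ((Fin n → I) × I)}
    (hG₀c : ContinuousOn G₀ Dset) (hG₀l : ∀ z ∈ Dset, q (G₀ z) = K z)
    {N l : ℕ} {k : Fin n → ℕ} (hN : 0 < N) (hkN : ∀ i, k i + 1 ≤ N) (hlN : l + 1 ≤ N)
    (hj : ∀ z ∈ cellZ N k l, K z ∈ W) (hTsub : TcellZ N k l ⊆ Dset) :
    ∃ Lc : (Fin n → I) × I → E, Continuous Lc ∧ (∀ z ∈ cellZ N k l, q (Lc z) = K z) ∧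
      ∀ z ∈ TcellZ N k l, Lc z = G₀ z := by
  classical
  set S : Finset (Fin n) := Finset.univ.filter (fun i => k i ≠ 0) with hS
  obtain ⟨r, hrc, hrm, hrid⟩ := exists_retr n S
  have heT : ∀ w ∈ TS n S, emap N k l w ∈ TcellZ N k l := fun w hw =>
    emap_mem_Tcell hN hkN hlN hw
  have hpf : ∀ w, q (G₀ (emap N k l (r w))) ∈ W := by
    intro w
    have h1 : emap N k l (r w) ∈ TcellZ N k l := heT _ (hrm w)
    rw [hG₀l _ (hTsub h1)]
    exact hj _ h1.1
  set K'' : (Fin n → I) × I → W := fun w => ⟨K (emap N k l w), hj _ (emap_mem hN hkN hlN w)⟩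
    with hK''
  set F₀'' : (Fin n → I) × I → (q ⁻¹' W) := fun w => ⟨G₀ (emap N k l (r w)), hpf w⟩
    with hF₀''
  have hK''c : Continuous K'' := (hK.comp (emap_cont N k l)).subtype_mk _
  have hF₀''c : Continuous F₀'' := by
    apply Continuous.subtype_mk
    exact hG₀c.comp_continuous ((emap_cont N k l).comp hrc)
      (fun w => hTsub (heT _ (hrm w)))
  have hcompat : ∀ w ∈ TS n S,
      (fun e : q ⁻¹' W => (⟨q e.1, e.2⟩ : W)) (F₀'' w) = K'' w := by
    intro w hw
    apply Subtype.ext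
    show q (G₀ (emap N k l (r w))) = K (emap N k l w)
    rw [hrid w hw]
    exact hG₀l _ (hTsub (heT _ hw))
  obtain ⟨L'', hL''c, hL''l, hL''T⟩ := hW S K'' hK''c F₀'' hF₀''c hcompat
  refine ⟨fun z => (L'' (dmap N k l z)).1,
    (continuous_subtype_val.comp hL''c).comp (dmap_cont N k l), ?_, ?_⟩
  · intro z hz
    have h1 := congrArg Subtype.val (hL''l (dmap N k l z))
    have h2 : q (L'' (dmap N k l z)).1 = K (emap N k l (dmap N k l z)) := h1
    rwa [emap_dmap hN hz] at h2
  · intro z hz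
    have hd : dmap N k l z ∈ TS n S := dmap_mem_TS hN hz
    have h1 := congrArg Subtype.val (hL''T _ hd)
    have h2 : (L'' (dmap N k l z)).1 = G₀ (emap N k l (r (dmap N k l z))) := h1
    rwa [hrid _ hd, emap_dmap hN hz.1] at h2

end CellLift
section MainPart

open unitInterval Set

theorem isSerreFibration_of_locally {E B : Type*} [TopologicalSpace E] [TopologicalSpace B]
    (q : E → B) {ι : Type*} (V : ι → Set B) (hVo : ∀ j, IsOpen (V j))
    (hVc : ∀ b, ∃ j, b ∈ V j)
    (hloc : ∀ j, IsSerreFibration (fun e : q ⁻¹' (V j) => (⟨q e.1, e.2⟩ : V j))) :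
    IsSerreFibration q := by
  classical
  intro n f K hf hK hK0
  have hcover : (Set.univ : Set ((Fin n → I) × I)) ⊆ ⋃ j, K ⁻¹' (V j) := by
    intro z _
    obtain ⟨j, hj⟩ := hVc (K z)
    exact Set.mem_iUnion.2 ⟨j, hj⟩
  obtain ⟨δ, hδ, hball⟩ := lebesgue_number_lemma_of_metric isCompact_univ
    (fun j => (hVo j).preimage hK) hcover
  obtain ⟨N₀, hN₀⟩ := exists_nat_one_div_lt hδ
  set N : ℕ := N₀ + 1 with hNdef
  have hN : 0 < N := Nat.succ_pos _
  have hNR : (0:ℝ) < N := by exact_mod_cast hN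
  have hδN : 1/(N:ℝ) < δ := by
    have hcast : (N:ℝ) = (N₀:ℝ) + 1 := by rw [hNdef]; push_cast; ring
    rw [hcast]
    exact hN₀
  have hcell : ∀ (k : Fin n → ℕ) (l : ℕ), (∀ i, k i + 1 ≤ N) → l + 1 ≤ N →
      ∃ j, ∀ z ∈ cellZ N k l, K z ∈ V j := by
    intro k l hkN hlN
    set z₀ : (Fin n → I) × I :=
      ((fun i => Set.projIcc 0 1 zero_le_one ((k i : ℝ)/N)),
        Set.projIcc 0 1 zero_le_one ((l : ℝ)/N)) with hz₀
    have hz₀1 : ∀ i, ((z₀.1 i : ℝ)) = (k i : ℝ)/N := by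
      intro i
      apply coe_projIcc_of_mem
      constructor
      · positivity
      · rw [div_le_one hNR]
        have : (k i : ℝ) + 1 ≤ N := by exact_mod_cast hkN i
        linarith
    have hz₀2 : ((z₀.2 : ℝ)) = (l : ℝ)/N := by
      apply coe_projIcc_of_mem
      constructor
      · positivity
      · rw [div_le_one hNR]
        have : (l : ℝ) + 1 ≤ N := by exact_mod_cast hlN
        linarith
    obtain ⟨j, hjb⟩ := hball z₀ (Set.mem_univ _)
    refine ⟨j, fun z hz => hjb ?_⟩
    rw [Metric.mem_ball]
    apply lt_of_le_of_lt _ hδN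
    have h1N : (0:ℝ) < 1/N := by positivity
    rw [Prod.dist_eq]
    apply max_le
    · refine (dist_pi_le_iff (by positivity)).2 fun i => ?_
      rw [Subtype.dist_eq, Real.dist_eq, hz₀1 i]
      have hb := hz.1 i
      have hstep : ((k i : ℝ)+1)/N = (k i : ℝ)/N + 1/N := by ring
      rw [abs_le]
      constructor
      · linarith [hb.1]
      · linarith [hb.2]
    · rw [Subtype.dist_eq, Real.dist_eq, hz₀2]
      have hb := hz.2
      have hstep : ((l : ℝ)+1)/N = (l : ℝ)/N + 1/N := by ring
      rw [abs_le]
      constructor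
      · linarith [hb.1]
      · linarith [hb.2]
  set D : ℕ → Set ((Fin n → I) × I) := fun l => {z | (z.2 : ℝ) ≤ (l:ℝ)/N} with hD
  have hDclosed : ∀ l, IsClosed (D l) := fun l => isClosed_le coord2_cont continuous_const
  have key : ∀ l : ℕ, l ≤ N → ∃ F : (Fin n → I) × I → E,
      ContinuousOn F (D l) ∧ (∀ z ∈ D l, q (F z) = K z) ∧ (∀ x, F (x, 0) = f x) := by
    intro l
    induction l with
    | zero =>
      intro _
      refine ⟨fun z => f z.1, (hf.comp continuous_fst).continuousOn, ?_, fun x => rfl⟩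
      intro z hz
      have hz' : (z.2:ℝ) ≤ 0 := by
        have h0 : ((0:ℕ):ℝ)/(N:ℝ) = 0 := by norm_num
        have := hz
        rw [hD] at this
        simpa [h0] using this
      have hz2 : z.2 = 0 := Subtype.ext (le_antisymm hz' z.2.2.1)
      have hzeq : z = (z.1, (0:I)) := by
        rw [Prod.ext_iff]
        exact ⟨rfl, hz2⟩
      show q (f z.1) = K z
      rw [hzeq]
      exact (hK0 z.1).symm
    | succ l ih =>
      intro hl1
      obtain ⟨Fl, hFlc, hFll, hFl0⟩ := ih (Nat.le_of_succ_le hl1)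
      set Dm : ℕ → Set ((Fin n → I) × I) := fun m =>
        D l ∪ ⋃ (kk : Fin n → Fin N) (_ : (∑ i, (kk i : ℕ)) < m),
          cellZ N (fun i => (kk i : ℕ)) l with hDm
      have hDmclosed : ∀ m, IsClosed (Dm m) := by
        intro m
        apply (hDclosed l).union
        exact Set.Finite.isClosed_biUnion (Set.toFinite _)
          (fun kk _ => isClosed_cellZ N _ l)
      have hDsub : ∀ m, D l ⊆ Dm m := fun m => Set.subset_union_left
      have hbotDm : ∀ (x : Fin n → I) (m : ℕ), ((x, (0:I)) : (Fin n → I) × I) ∈ Dm m := by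
        intro x m
        apply hDsub m
        show ((0:I):ℝ) ≤ (l:ℝ)/N
        rw [coe_I_zero]
        positivity
      have inner : ∀ m : ℕ, ∃ F, ContinuousOn F (Dm m) ∧ (∀ z ∈ Dm m, q (F z) = K z) ∧
          (∀ x, F (x, 0) = f x) := by
        intro m
        induction m with
        | zero =>
          have hno : Dm 0 = D l := by
            rw [hDm]
            simp
          rw [hno]
          exact ⟨Fl, hFlc, hFll, hFl0⟩
        | succ m ihm =>
          obtain ⟨Fm, hFmc, hFml, hFm0⟩ := ihm
          have step : ∀ s : Finset (Fin n → Fin N), (∀ kk ∈ s, (∑ i, (kk i : ℕ)) = m) →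
              ∃ F, ContinuousOn F (Dm m ∪ ⋃ kk ∈ s, cellZ N (fun i => (kk i : ℕ)) l) ∧
                (∀ z ∈ Dm m ∪ ⋃ kk ∈ s, cellZ N (fun i => (kk i : ℕ)) l, q (F z) = K z) ∧
                (∀ z ∈ Dm m, F z = Fm z) := by
            intro s
            induction s using Finset.induction_on with
            | empty =>
              intro _
              rw [show (⋃ kk ∈ (∅ : Finset (Fin n → Fin N)),
                cellZ N (fun i => (kk i : ℕ)) l) = ∅ by simp, Set.union_empty]
              exact ⟨Fm, hFmc, hFml, fun z _ => rfl⟩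
            | @insert k₀ s hk₀s ihs =>
              intro hmem
              obtain ⟨Fs, hFsc, hFsl, hFsm⟩ :=
                ihs (fun kk hkk => hmem kk (Finset.mem_insert_of_mem hkk))
              have hrank : (∑ i, ((k₀ i : ℕ))) = m := hmem k₀ (Finset.mem_insert_self _ _)
              have hkN : ∀ i, (k₀ i : ℕ) + 1 ≤ N := fun i => (k₀ i).2
              obtain ⟨j, hjV⟩ := hcell (fun i => (k₀ i : ℕ)) l hkN hl1
              have hTsub : TcellZ N (fun i => (k₀ i : ℕ)) l ⊆ Dm m := by
                rintro z ⟨hzc, hface⟩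
                rcases hface with hb | ⟨i, hki, hzi⟩
                · exact hDsub m (le_of_eq hb)
                · right
                  have hlt : (k₀ i : ℕ) - 1 < N :=
                    lt_of_le_of_lt (Nat.sub_le _ _) (k₀ i).2
                  set kk' : Fin n → Fin N := Function.update k₀ i ⟨(k₀ i : ℕ) - 1, hlt⟩
                    with hkk'
                  have hkkval : (kk' i : ℕ) = (k₀ i : ℕ) - 1 := by
                    rw [hkk', Function.update_self]
                  refine Set.mem_iUnion.2 ⟨kk', Set.mem_iUnion.2 ⟨?_, ?_⟩⟩
                  · rw [← hrank]
                    apply Finset.sum_lt_sum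
                    · intro i' _
                      by_cases h : i' = i
                      · subst h
                        simp only [hkkval]
                        exact Nat.sub_le _ _
                      · simp only [hkk', Function.update_of_ne h]
                        exact le_rfl
                    · refine ⟨i, Finset.mem_univ i, ?_⟩
                      simp only [hkkval]
                      exact Nat.sub_lt (Nat.pos_of_ne_zero hki) one_pos
                  · refine ⟨fun i' => ?_, hzc.2⟩
                    by_cases h : i' = i
                    · subst h
                      simp only [hkkval]
                      have h1le : 1 ≤ (k₀ i' : ℕ) := Nat.pos_of_ne_zero hki
                      have hc1 : (((k₀ i' : ℕ) - 1 : ℕ) : ℝ) = ((k₀ i' : ℕ) : ℝ) - 1 := by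
                        rw [Nat.cast_sub h1le, Nat.cast_one]
                      rw [hc1, hzi]
                      constructor
                      · rw [div_le_div_iff_of_pos_right hNR]
                        linarith
                      · apply le_of_eq
                        congr 1
                        ring
                    · simp only [hkk', Function.update_of_ne h]
                      exact hzc.1 i'
              obtain ⟨Lc, hLcc, hLcl, hLcT⟩ := cell_lift
                (fun S => relHLP_of_serre (hloc j) n S) hK hFmc hFml hN hkN hl1 hjV hTsub
              set A := Dm m ∪ ⋃ kk ∈ s, cellZ N (fun i => (kk i : ℕ)) l with hA
              have hAclosed : IsClosed A :=
                (hDmclosed m).union (Set.Finite.isClosed_biUnion s.finite_toSet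
                  (fun kk _ => isClosed_cellZ N _ l))
              have hinter : ∀ z ∈ A ∩ cellZ N (fun i => (k₀ i : ℕ)) l,
                  z ∈ TcellZ N (fun i => (k₀ i : ℕ)) l := by
                rintro z ⟨hzA, hzc⟩
                refine ⟨hzc, ?_⟩
                rcases hzA with hzDm | hzU
                · rcases hzDm with hzDl | hzCell
                  · left
                    exact le_antisymm hzDl hzc.2.1
                  · obtain ⟨kk, hkm⟩ := Set.mem_iUnion.1 hzCell
                    obtain ⟨hkmlt, hzkk⟩ := Set.mem_iUnion.1 hkm
                    right
                    have hsumlt : (∑ i, (kk i : ℕ)) < ∑ i, (k₀ i : ℕ) := by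
                      rw [hrank]
                      exact hkmlt
                    obtain ⟨i, _, hilt⟩ := Finset.exists_lt_of_sum_lt hsumlt
                    obtain ⟨hne, heq⟩ := cell_inter_face hN hzc hzkk hilt
                    exact ⟨i, hne, heq⟩
                · obtain ⟨kk, hkm⟩ := Set.mem_iUnion.1 hzU
                  obtain ⟨hkks, hzkk⟩ := Set.mem_iUnion.1 hkm
                  right
                  have hkks' : kk ∈ s := hkks
                  have hsum : (∑ i, (kk i : ℕ)) = ∑ i, (k₀ i : ℕ) := by
                    rw [hrank]
                    exact hmem kk (Finset.mem_insert_of_mem hkks')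
                  have hkne : kk ≠ k₀ := fun h => hk₀s (h ▸ hkks')
                  have hex : ∃ i, (kk i : ℕ) < (k₀ i : ℕ) := by
                    by_contra hall
                    push_neg at hall
                    have hkeq : ∀ i, (k₀ i : ℕ) = (kk i : ℕ) := by
                      by_contra hne2
                      push_neg at hne2
                      obtain ⟨i0, hi0⟩ := hne2
                      have hstrict : (k₀ i0 : ℕ) < kk i0 := lt_of_le_of_ne (hall i0) hi0
                      have : (∑ i, (k₀ i : ℕ)) < ∑ i, (kk i : ℕ) :=
                        Finset.sum_lt_sum (fun i _ => hall i)
                          ⟨i0, Finset.mem_univ i0, hstrict⟩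
                      omega
                    exact hkne (funext fun i => Fin.ext (hkeq i).symm)
                  obtain ⟨i, hilt⟩ := hex
                  obtain ⟨hne, heq⟩ := cell_inter_face hN hzc hzkk hilt
                  exact ⟨i, hne, heq⟩
              have hagree : ∀ z ∈ A ∩ cellZ N (fun i => (k₀ i : ℕ)) l, Fs z = Lc z := by
                intro z hz
                have hT := hinter z hz
                rw [hFsm z (hTsub hT), hLcT z hT]
              have hsetEq : (Dm m ∪ ⋃ kk ∈ insert k₀ s, cellZ N (fun i => (kk i : ℕ)) l)
                  = A ∪ cellZ N (fun i => (k₀ i : ℕ)) l := by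
                rw [Finset.set_biUnion_insert, hA]
                ext z
                simp only [Set.mem_union]
                tauto
              refine ⟨fun z => if z ∈ A then Fs z else Lc z, ?_, ?_, ?_⟩
              · rw [hsetEq]
                exact glue_closed hAclosed (isClosed_cellZ N _ l) hFsc
                  hLcc.continuousOn hagree
              · intro z hz
                rw [hsetEq] at hz
                show q (if z ∈ A then Fs z else Lc z) = K z
                by_cases hzA : z ∈ A
                · rw [if_pos hzA]
                  exact hFsl z hzA
                · rw [if_neg hzA]
                  rcases hz with hz | hz
                  · exact absurd hz hzA
                  · exact hLcl z hz
              · intro z hzDm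
                show (if z ∈ A then Fs z else Lc z) = Fm z
                rw [if_pos (Set.mem_union_left _ hzDm)]
                exact hFsm z hzDm
          obtain ⟨F, h1, h2, h3⟩ := step (Finset.univ.filter fun kk => (∑ i, (kk i : ℕ)) = m)
            (fun kk hkk => (Finset.mem_filter.1 hkk).2)
          have hsetEq2 : Dm (m+1) = Dm m ∪ ⋃ kk ∈ Finset.univ.filter
              (fun kk : Fin n → Fin N => (∑ i, (kk i : ℕ)) = m),
              cellZ N (fun i => (kk i : ℕ)) l := by
            rw [hDm]
            ext z
            simp only [Set.mem_union, Set.mem_iUnion, Finset.mem_filter, Finset.mem_univ,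
              true_and, exists_prop, Set.mem_setOf_eq]
            constructor
            · rintro (hd | ⟨kk, hlt, hcell'⟩)
              · left; left; exact hd
              · rcases Nat.lt_succ_iff_lt_or_eq.1 hlt with h | h
                · left; right; exact ⟨kk, h, hcell'⟩
                · right; exact ⟨kk, h, hcell'⟩
            · rintro ((hd | ⟨kk, hlt, hcell'⟩) | ⟨kk, heqr, hcell'⟩)
              · left; exact hd
              · right; exact ⟨kk, Nat.lt_succ_of_lt hlt, hcell'⟩
              · right; exact ⟨kk, by omega, hcell'⟩
          refine ⟨F, ?_, ?_, ?_⟩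
          · rw [hsetEq2]
            exact h1
          · rw [hsetEq2]
            exact h2
          · intro x
            rw [h3 (x, 0) (hbotDm x m)]
            exact hFm0 x
      obtain ⟨F, h1, h2, h3⟩ := inner (n * N + 1)
      have hsub : D (l+1) ⊆ Dm (n * N + 1) := by
        intro z hz
        by_cases hzl : (z.2 : ℝ) ≤ (l:ℝ)/N
        · exact hDsub _ hzl
        · push_neg at hzl
          right
          have hltN : ∀ i, min ⌊((z.1 i : ℝ)) * N⌋₊ (N-1) < N :=
            fun i => lt_of_le_of_lt (min_le_right _ _) (Nat.sub_lt hN one_pos)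
          set kk : Fin n → Fin N := fun i => ⟨min ⌊((z.1 i : ℝ)) * N⌋₊ (N-1), hltN i⟩
            with hkk
          refine Set.mem_iUnion.2 ⟨kk, Set.mem_iUnion.2 ⟨?_, ?_, ?_⟩⟩
          · have hb : ∀ i, (kk i : ℕ) ≤ N := fun i => le_of_lt (kk i).2
            calc (∑ i, (kk i : ℕ)) ≤ ∑ _i : Fin n, N :=
                Finset.sum_le_sum (fun i _ => hb i)
            _ = n * N := by
                rw [Finset.sum_const, Finset.card_univ, Fintype.card_fin, smul_eq_mul]
            _ < n * N + 1 := Nat.lt_succ_self _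
          · intro i
            have hx01 : ((z.1 i : ℝ)) ∈ Icc (0:ℝ) 1 := (z.1 i).2
            have hxN0 : (0:ℝ) ≤ (z.1 i : ℝ) * N := mul_nonneg hx01.1 (le_of_lt hNR)
            rcases le_or_gt ⌊((z.1 i : ℝ)) * N⌋₊ (N-1) with hmin | hmin
            · have hk' : (kk i : ℕ) = ⌊((z.1 i : ℝ)) * N⌋₊ := by
                show min ⌊((z.1 i : ℝ)) * N⌋₊ (N-1) = _
                rw [min_eq_left hmin]
              simp only [hk']
              constructor
              · rw [div_le_iff₀ hNR]
                exact Nat.floor_le hxN0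
              · rw [le_div_iff₀ hNR]
                have := Nat.lt_floor_add_one ((z.1 i : ℝ) * N)
                linarith
            · have hk' : (kk i : ℕ) = N - 1 := by
                show min ⌊((z.1 i : ℝ)) * N⌋₊ (N-1) = _
                rw [min_eq_right (le_of_lt hmin)]
              have hNfl : N ≤ ⌊((z.1 i : ℝ)) * N⌋₊ := by omega
              have hge : (N:ℝ) ≤ (z.1 i : ℝ) * N := by
                have h1 : (N:ℝ) ≤ (⌊((z.1 i : ℝ)) * N⌋₊ : ℝ) := by exact_mod_cast hNfl
                have h2 : ((⌊((z.1 i : ℝ)) * N⌋₊ : ℕ) : ℝ) ≤ (z.1 i : ℝ) * N :=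
                  Nat.floor_le hxN0
                linarith
              have hx1 : ((z.1 i : ℝ)) = 1 := by
                have hge1 : (1:ℝ) ≤ (z.1 i : ℝ) := by nlinarith
                exact le_antisymm hx01.2 hge1
              have hcast : (((N-1:ℕ)):ℝ) = (N:ℝ) - 1 := by
                rw [Nat.cast_sub hN, Nat.cast_one]
              simp only [hk']
              simp only [hcast, hx1]
              constructor
              · rw [div_le_one hNR]
                linarith
              · rw [le_div_iff₀ hNR]
                linarith
          · constructor
            · exact le_of_lt hzl
            · have hcast : ((l:ℝ)+1) = (((l+1:ℕ)):ℝ) := by push_cast; ring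
              rw [hcast]
              exact hz
      exact ⟨F, h1.mono hsub, fun z hz => h2 z (hsub hz), h3⟩
  obtain ⟨F, h1, h2, h3⟩ := key N le_rfl
  have huniv : D N = Set.univ := by
    ext z
    simp only [Set.mem_univ, iff_true, hD, Set.mem_setOf_eq]
    rw [div_self (ne_of_gt hNR)]
    exact z.2.2.2
  refine ⟨F, ?_, h3, fun z => h2 z (by rw [huniv]; trivial)⟩
  rw [← continuousOn_univ, ← huniv]
  exact h1

end MainPart

section Transport

open unitInterval

theorem isSerreFibration_transport {E B E' B' : Type*} [TopologicalSpace E] [TopologicalSpace B]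
    [TopologicalSpace E'] [TopologicalSpace B'] {q : E → B} {q' : E' → B'}
    {eE : E → E'} {eE' : E' → E} {eB : B → B'} {eB' : B' → B}
    (hEc : Continuous eE) (hB'c : Continuous eB')
    (hEE' : ∀ x, eE (eE' x) = x) (hBB : ∀ x, eB' (eB x) = x) (hBB' : ∀ x, eB (eB' x) = x)
    (hE'c : Continuous eE')
    (hcomm : ∀ x, q' (eE x) = eB (q x))
    (h : IsSerreFibration q) : IsSerreFibration q' := by
  intro n f K hf hK hK0
  obtain ⟨L, hLc, hL0, hLl⟩ := h n (fun x => eE' (f x)) (fun z => eB' (K z))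
    (hE'c.comp hf) (hB'c.comp hK)
    (by
      intro c
      have h1 := hcomm (eE' (f c))
      rw [hEE'] at h1
      show eB' (K (c, 0)) = q (eE' (f c))
      rw [hK0 c, h1, hBB])
  refine ⟨fun z => eE (L z), hEc.comp hLc, ?_, ?_⟩
  · intro c
    show eE (L (c, 0)) = f c
    rw [hL0 c, hEE']
  · intro z
    show q' (eE (L z)) = K z
    rw [hcomm (L z), hLl z, hBB']

end Transport

end Stmt8

/-- If `p : X → Y` is a `G`-map and there is a cover of `Y` by `G`-invariant
open sets over each of which `p` restricts to a `C`-fibration, then `p` is a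
`C`-fibration. -/
theorem statement8 {X Y : Type v}
    [TopologicalSpace X] [MulAction G X] [ContinuousSMul G X]
    [TopologicalSpace Y] [MulAction G Y] [ContinuousSMul G Y]
    (C : Set (Subgroup G))
    (hCclosed : ∀ K ∈ C, IsClosed (K : Set G))
    (hCconj : ∀ K ∈ C, ∀ g : G, Subgroup.map (MulAut.conj g).toMonoidHom K ∈ C)
    (p : X → Y) (hp : IsGMap G p)
    {ι : Type v} (U : ι → Set Y)
    (hUopen : ∀ j, IsOpen (U j)) (hUcover : ∀ y, ∃ j, y ∈ U j)
    [∀ j, GInvariantSet G (U j)] [∀ j, GInvariantSet G (p ⁻¹' U j)]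
    (hloc : ∀ j, IsCFibration G C (fun x : (p ⁻¹' U j) => (⟨p x.1, x.2⟩ : U j))) :
    IsCFibration G C p := by
    classical
  refine ⟨hp, ?_⟩
  intro H hH
  apply Stmt8.isSerreFibration_of_locally (fixedRes G H p hp.2)
    (fun j => (Subtype.val : fixedSet G H Y → Y) ⁻¹' U j)
  · exact fun j => (hUopen j).preimage continuous_subtype_val
  · intro b
    obtain ⟨j, hj⟩ := hUcover b.1
    exact ⟨j, hj⟩
  · intro j
    obtain ⟨hpj, hSj⟩ := hloc j
    have hS := hSj H hH
    exact Stmt8.isSerreFibration_transport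
      (eE := fun x : fixedSet G H (p ⁻¹' U j) =>
        (⟨⟨x.1.1, fun h hh => congrArg Subtype.val (x.2 h hh)⟩, x.1.2⟩ :
          (fixedRes G H p hp.2) ⁻¹' ((Subtype.val : fixedSet G H Y → Y) ⁻¹' U j)))
      (eE' := fun e => ⟨⟨e.1.1, e.2⟩, fun h hh => Subtype.ext (e.1.2 h hh)⟩)
      (eB := fun y : fixedSet G H (U j) =>
        (⟨⟨y.1.1, fun h hh => congrArg Subtype.val (y.2 h hh)⟩, y.1.2⟩ :
          ((Subtype.val : fixedSet G H Y → Y) ⁻¹' U j)))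
      (eB' := fun w => ⟨⟨w.1.1, w.2⟩, fun h hh => Subtype.ext (w.1.2 h hh)⟩)
      (((continuous_subtype_val.comp continuous_subtype_val).subtype_mk _).subtype_mk _)
      (((continuous_subtype_val.comp continuous_subtype_val).subtype_mk _).subtype_mk _)
      (fun e => Subtype.ext (Subtype.ext rfl))
      (fun y => Subtype.ext (Subtype.ext rfl))
      (fun w => Subtype.ext (Subtype.ext rfl))
      (((continuous_subtype_val.comp continuous_subtype_val).subtype_mk _).subtype_mk _)
      (fun x => Subtype.ext (Subtype.ext rfl))
      hS
end
end
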